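/- Let M be a stable matching of the marriage instance Ĝ_φ. If G_M contains no M-augmenting path, then the assignment A_M satisfies φ. Conversely, if A is a satisfying assignment of φ, then G_{M_A} contains no M_A-augmenting path. -/

import Mathlib

open scoped Classical

namespace PopMatch

/-- A marriage/roommates instance: a vertex set with a bipartition `A`/`B`
(ignored for roommates instances) and, for each vertex, a strict preference
list over its neighbors (most preferred first).  Adjacency is given by mutual
membership in the preference lists. -/
structure Inst (V : Type*) where
  A : Finset V
  B : Finset V
  plist : V → List V

namespace Inst

variable {V : Type*} [DecidableEq V] [Fintype V]

/-- `u` and `v` are adjacent. -/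
def adj (I : Inst V) (u v : V) : Prop := v ∈ I.plist u ∧ u ∈ I.plist v

/-- `u` (strictly) prefers `v` to `w`. -/
def pref (I : Inst V) (u v w : V) : Prop :=
  v ∈ I.plist u ∧ w ∈ I.plist u ∧ (I.plist u).idxOf v < (I.plist u).idxOf w

/-- Well-formedness of an instance as a marriage instance: preference lists are
duplicate-free and symmetric, and the graph is bipartite with parts `A`, `B`. -/
def IsValid (I : Inst V) : Prop :=
  (∀ v, (I.plist v).Nodup) ∧
  (∀ u v, v ∈ I.plist u ↔ u ∈ I.plist v) ∧
  Disjoint I.A I.B ∧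
  (∀ v : V, v ∈ I.A ∨ v ∈ I.B) ∧
  (∀ u v, v ∈ I.plist u → ((u ∈ I.A ∧ v ∈ I.B) ∨ (u ∈ I.B ∧ v ∈ I.A)))

/-- A matching, encoded by its partner function. -/
def IsMatching (I : Inst V) (p : V → Option V) : Prop :=
  (∀ u v, p u = some v → p v = some u) ∧ (∀ u v, p u = some v → I.adj u v)

/-- The number of matched vertices (twice the number of edges of the matching). -/
def msize (p : V → Option V) : ℕ := (Finset.univ.filter fun u => (p u).isSome).card

/-- Vertex `u` prefers matching `p` to matching `q`. -/
def PrefM (I : Inst V) (p q : V → Option V) (u : V) : Prop :=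
  match p u, q u with
  | some _, none => True
  | some v, some w => I.pref u v w
  | none, _ => False

/-- `phi p q` = number of vertices preferring `p` to `q`. -/
noncomputable def phi (I : Inst V) (p q : V → Option V) : ℕ :=
  (Finset.univ.filter fun u => I.PrefM p q u).card

/-- `delta p q = phi p q - phi q p`. -/
noncomputable def delta (I : Inst V) (p q : V → Option V) : ℤ :=
  (I.phi p q : ℤ) - (I.phi q p : ℤ)

/-- A popular matching: it never loses a head-to-head election. -/
def Popular (I : Inst V) (p : V → Option V) : Prop :=
  I.IsMatching p ∧ ∀ q, I.IsMatching q → 0 ≤ I.delta p q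

/-- A dominant matching: a popular matching that beats every larger matching. -/
def Dominant (I : Inst V) (p : V → Option V) : Prop :=
  I.Popular p ∧ ∀ q, I.IsMatching q → msize p < msize q → 0 < I.delta p q

/-- A maximum-size popular matching. -/
def MaxPopular (I : Inst V) (p : V → Option V) : Prop :=
  I.Popular p ∧ ∀ q, I.Popular q → msize q ≤ msize p

/-- A minimum-size popular matching. -/
def MinPopular (I : Inst V) (p : V → Option V) : Prop :=
  I.Popular p ∧ ∀ q, I.Popular q → msize p ≤ msize q

/-- `u` prefers `v` to its situation in the matching `p`
(an unmatched vertex prefers any neighbor to being unmatched). -/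
def PrefOver (I : Inst V) (p : V → Option V) (u v : V) : Prop :=
  match p u with
  | none => True
  | some w => I.pref u v w

/-- The edge `(u,v)` blocks the matching `p`. -/
def Blocks (I : Inst V) (p : V → Option V) (u v : V) : Prop :=
  I.adj u v ∧ p u ≠ some v ∧ I.PrefOver p u v ∧ I.PrefOver p v u

/-- A stable matching: a matching with no blocking edge. -/
def Stable (I : Inst V) (p : V → Option V) : Prop :=
  I.IsMatching p ∧ ∀ u v, ¬ I.Blocks p u v

/-- Adjacency in the subgraph `G_M` obtained by deleting the edges
labeled `(-,-)` with respect to the matching `p`. -/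
def GMAdj (I : Inst V) (p : V → Option V) (u v : V) : Prop :=
  I.adj u v ∧ (p u = some v ∨ I.PrefOver p u v ∨ I.PrefOver p v u)

/-- `f 0, f 1, …, f n` is an augmenting path with respect to the matching `p`
inside the subgraph `G_M`: an odd number `n` of edges, alternately outside and
inside `p`, with both endpoints unmatched. -/
def IsAugPath (I : Inst V) (p : V → Option V) (n : ℕ) (f : ℕ → V) : Prop :=
  n % 2 = 1 ∧
  (∀ i j, i ≤ n → j ≤ n → f i = f j → i = j) ∧
  (∀ i, i < n → I.GMAdj p (f i) (f (i + 1))) ∧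
  (∀ i, i < n → (p (f i) = some (f (i + 1)) ↔ i % 2 = 1)) ∧
  p (f 0) = none ∧ p (f n) = none

/-- `G_M` contains an augmenting path with respect to `p`. -/
def HasAugPath (I : Inst V) (p : V → Option V) : Prop := ∃ n f, I.IsAugPath p n f

/-- `u` prefers its situation in the matching `p` to `v`. -/
def PrefSit (I : Inst V) (p : V → Option V) (u v : V) : Prop :=
  match p u with
  | none => False
  | some w => I.pref u w v

/-- The weight `wt_p(u,v)` of an edge: `2` for a blocking edge, `-2` for a
`(-,-)` edge, `0` otherwise. -/
noncomputable def wtE (I : Inst V) (p : V → Option V) (u v : V) : ℤ :=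
  if I.PrefOver p u v ∧ I.PrefOver p v u then 2
  else if I.PrefSit p u v ∧ I.PrefSit p v u then -2 else 0

/-- The weight `wt_p(u,u)` of a self-loop. -/
def wtSelf (p : V → Option V) (u : V) : ℤ := if p u = none then 0 else -1

/-- A witness (dual certificate) for the popularity of the matching `p`. -/
def IsWitness (I : Inst V) (p : V → Option V) (α : V → ℤ) : Prop :=
  (∀ u, α u = 0 ∨ α u = 1 ∨ α u = -1) ∧
  (∑ u : V, α u) = 0 ∧
  (∀ u v, I.adj u v → I.wtE p u v ≤ α u + α v) ∧
  (∀ u : V, wtSelf p u ≤ α u)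

end Inst

end PopMatch

namespace PopMatch

/-- A 3SAT formula: `m` clauses over `n` variables, each clause a nonempty
list of at most three literals (a literal is a variable together with a
polarity, `true` meaning a positive occurrence). -/
structure Formula where
  n : ℕ
  m : ℕ
  clauses : Fin m → List (Fin n × Bool)
  nonempty : ∀ i, clauses i ≠ []
  three : ∀ i, (clauses i).length ≤ 3

namespace Formula

variable (F : Formula)

/-- The variables of the transformed formula `φ`: `X_1, …, X_{2n}`, where
`X_{n+i}` stands for `¬X_i`. -/
abbrev Var := Fin (2 * F.n)

/-- The transformed variable corresponding to a literal: `X_i ↦ X_i` and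
`¬X_i ↦ X_{n+i}`. -/
def tvar (l : Fin F.n × Bool) : F.Var :=
  if l.2 then ⟨l.1.val, by have := l.1.isLt; omega⟩
  else ⟨F.n + l.1.val, by have := l.1.isLt; omega⟩

/-- The variable `X_k` (for `k < n`). -/
def varFst (k : Fin F.n) : F.Var := ⟨k.val, by have := k.isLt; omega⟩

/-- The variable `X_{n+k}` (for `k < n`). -/
def varSnd (k : Fin F.n) : F.Var := ⟨F.n + k.val, by have := k.isLt; omega⟩

/-- The positive clauses of the transformed formula `φ`:
`C_1, …, C_m` are the original clauses with `¬X_i` replaced by `X_{n+i}`, and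
`C_{m+i} = X_i ∨ X_{n+i}` for `1 ≤ i ≤ n`. -/
def posClause (i : Fin (F.m + F.n)) : List F.Var :=
  if h : i.val < F.m then (F.clauses ⟨i.val, h⟩).map F.tvar
  else [⟨i.val - F.m, by have := i.isLt; omega⟩,
        ⟨F.n + (i.val - F.m), by have := i.isLt; omega⟩]

theorem posClause_length_le (i : Fin (F.m + F.n)) : (F.posClause i).length ≤ 3 := by
  unfold posClause
  split
  · simpa using F.three _
  · simp

theorem posClause_ne_nil (i : Fin (F.m + F.n)) : F.posClause i ≠ [] := by
  unfold posClause
  split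
  · simpa using F.nonempty _
  · simp

/-- An assignment satisfies the transformed formula `φ` if every positive
clause `C_i` contains a true variable and every negative clause
`D_{m+n+i} = ¬X_i ∨ ¬X_{n+i}` contains a false one. -/
def Sat (A : F.Var → Bool) : Prop :=
  (∀ i : Fin (F.m + F.n), ∃ x ∈ F.posClause i, A x = true) ∧
  (∀ k : Fin F.n, A (F.varFst k) = false ∨ A (F.varSnd k) = false)

/-- The index (among `1, …, n`) of the negative clause containing the unique
negated occurrence `¬x` of the variable `x`. -/
def negIdx (x : F.Var) : Fin F.n :=
  if h : x.val < F.n then ⟨x.val, h⟩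
  else ⟨x.val - F.n, by have := x.isLt; omega⟩

/-- An occurrence of a (positive) literal: a positive clause index together
with a position inside that clause. -/
def Occ := {q : Fin (F.m + F.n) × Fin 3 // q.2.val < (F.posClause q.1).length}

instance : DecidableEq F.Occ := by unfold Occ; infer_instance

instance : Fintype F.Occ := by unfold Occ; exact Subtype.fintype _

/-- The variable occurring at the occurrence `o`. -/
def litOf (o : F.Occ) : F.Var := (F.posClause o.1.1).get ⟨o.1.2.val, o.2⟩

/-- The list of all occurrences in the positive clause `i`, in clause order. -/
def occList (i : Fin (F.m + F.n)) : List F.Occ :=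
  (List.finRange (F.posClause i).length).map
    (fun j => ⟨(i, ⟨j.val, lt_of_lt_of_le j.isLt (F.posClause_length_le i)⟩), j.isLt⟩)

/-- The list of all occurrences of the variable `x`, in a fixed order. -/
def occsOfVar (x : F.Var) : List F.Occ :=
  ((List.finRange (F.m + F.n)).map (fun i => F.occList i)).flatten.filter
    (fun o => decide (F.litOf o = x))

end Formula

end PopMatch

namespace PopMatch

/-- The clauses of the transformed formula: positive ones (`.inl`) and the
negative clauses `D = ¬X_k ∨ ¬X_{n+k}` (`.inr k`). -/
abbrev CIdx (F : Formula) := Fin (F.m + F.n) ⊕ Fin F.n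

/-- The number of literals of a clause. -/
def clen (F : Formula) : CIdx F → ℕ
  | Sum.inl i => (F.posClause i).length
  | Sum.inr _ => 2

/-- Index of a `u`/`v` vertex of `Ĝ_φ`: a clause `ℓ` with `r` literals
together with a position `0 ≤ j ≤ r`. -/
abbrev UVIdx (F : Formula) := Σ ℓ : CIdx F, Fin (clen F ℓ + 1)

/-- The list of all clauses. -/
def allC (F : Formula) : List (CIdx F) :=
  ((List.finRange (F.m + F.n)).map Sum.inl) ++ ((List.finRange F.n).map Sum.inr)

/-- The occurrence given by position `jj` (0-based) of the positive
clause `i`. -/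
def mkOcc (F : Formula) (i : Fin (F.m + F.n)) (jj : ℕ)
    (h : jj < (F.posClause i).length) : F.Occ :=
  ⟨(i, ⟨jj, lt_of_lt_of_le h (F.posClause_length_le i)⟩), h⟩

/-- The vertices of the marriage instance `Ĝ_φ`. -/
inductive HGV (F : Formula) where
  | s : HGV F
  | t : HGV F
  | u : UVIdx F → HGV F
  | vv : UVIdx F → HGV F
  | pa : F.Occ → HGV F
  | pb : F.Occ → HGV F
  | pa' : F.Occ → HGV F
  | pb' : F.Occ → HGV F
  | nc : F.Var → HGV F
  | nd : F.Var → HGV F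
  | nc' : F.Var → HGV F
  | nd' : F.Var → HGV F
  deriving DecidableEq, Fintype

namespace HGV

/-- The preference lists of `Ĝ_φ`. -/
def plist (F : Formula) : HGV F → List (HGV F)
  | .s => (allC F).map (fun ℓ => .u ⟨ℓ, ⟨0, Nat.succ_pos _⟩⟩)
  | .t => (allC F).map (fun ℓ => .vv ⟨ℓ, ⟨clen F ℓ, Nat.lt_succ_self _⟩⟩)
  | .u ⟨Sum.inl i, j⟩ =>
      if h0 : j.val = 0 then [.vv ⟨Sum.inl i, j⟩, .s]
      else
        [.pb (mkOcc F i (j.val - 1)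
            (by have hj := j.isLt; simp only [clen] at hj; omega)),
         .vv ⟨Sum.inl i, j⟩]
  | .u ⟨Sum.inr k, j⟩ =>
      if j.val = 0 then [.vv ⟨Sum.inr k, j⟩, .s]
      else [.vv ⟨Sum.inr k, j⟩,
            .nd (if j.val = 1 then F.varFst k else F.varSnd k)]
  | .vv ⟨Sum.inl i, j⟩ =>
      if h0 : j.val = (F.posClause i).length then [.u ⟨Sum.inl i, j⟩, .t]
      else
        [.u ⟨Sum.inl i, j⟩,
         .pa (mkOcc F i j.val
            (by have hj := j.isLt; simp only [clen] at hj; omega))]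
  | .vv ⟨Sum.inr k, j⟩ =>
      if j.val = 2 then [.u ⟨Sum.inr k, j⟩, .t]
      else [.nc (if j.val = 0 then F.varFst k else F.varSnd k),
            .u ⟨Sum.inr k, j⟩]
  | .pa o =>
      [.pb o,
       .vv ⟨Sum.inl o.1.1, ⟨o.1.2.val, by
          have := o.2; simp only [clen]; omega⟩⟩,
       .pb' o]
  | .pa' o => [.pb' o, .pb o]
  | .pb o =>
      [.pa' o, .nc (F.litOf o), .pa o,
       .u ⟨Sum.inl o.1.1, ⟨o.1.2.val + 1, by
          have := o.2; simp only [clen]; omega⟩⟩]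
  | .pb' o => [.pa o, .pa' o]
  | .nc x =>
      .nd x :: (F.occsOfVar x).map HGV.pb ++
        [.nd' x,
         .vv ⟨Sum.inr (F.negIdx x), ⟨if x.val < F.n then 0 else 1, by
            have : clen F (Sum.inr (F.negIdx x)) = 2 := rfl
            rw [this]; split <;> omega⟩⟩]
  | .nc' x => [.nd' x, .nd x]
  | .nd x =>
      [.nc' x,
       .u ⟨Sum.inr (F.negIdx x), ⟨if x.val < F.n then 1 else 2, by
          have : clen F (Sum.inr (F.negIdx x)) = 2 := rfl
          rw [this]; split <;> omega⟩⟩,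
       .nc x]
  | .nd' x => [.nc x, .nc' x]

/-- The bipartition side of a vertex of `Ĝ_φ`. -/
def side {F : Formula} : HGV F → Bool
  | .t => true
  | .u _ => true
  | .pa _ => true
  | .pa' _ => true
  | .nc _ => true
  | .nc' _ => true
  | _ => false

end HGV

/-- The marriage instance `Ĝ_φ` associated with the transformed 3SAT
formula `φ`. -/
def Ghat (F : Formula) : Inst (HGV F) :=
  ⟨Finset.univ.filter (fun w => HGV.side w = true),
   Finset.univ.filter (fun w => HGV.side w = false),
   HGV.plist F⟩

variable {F : Formula}

/-- The gadget of the occurrence `o` is in **true state** in the matching `p`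
of `Ĝ_φ` (it contains the edges `(a_j, b_j)` and `(a'_j, b'_j)`). -/
def PosTrueH (p : HGV F → Option (HGV F)) (o : F.Occ) : Prop :=
  p (HGV.pa o) = some (HGV.pb o) ∧ p (HGV.pa' o) = some (HGV.pb' o)

/-- The gadget of the occurrence `o` is in **false state** in the matching `p`
of `Ĝ_φ` (it contains the edges `(a_j, b'_j)` and `(a'_j, b_j)`). -/
def PosFalseH (p : HGV F → Option (HGV F)) (o : F.Occ) : Prop :=
  p (HGV.pa o) = some (HGV.pb' o) ∧ p (HGV.pa' o) = some (HGV.pb o)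

/-- The gadget of `¬x` is in **true state** in the matching `p` of `Ĝ_φ`
(it contains the edges `(c_k, d'_k)` and `(c'_k, d_k)`). -/
def NegTrueH (p : HGV F → Option (HGV F)) (x : F.Var) : Prop :=
  p (HGV.nc x) = some (HGV.nd' x) ∧ p (HGV.nc' x) = some (HGV.nd x)

/-- The gadget of `¬x` is in **false state** in the matching `p` of `Ĝ_φ`
(it contains the edges `(c_k, d_k)` and `(c'_k, d'_k)`). -/
def NegFalseH (p : HGV F → Option (HGV F)) (x : F.Var) : Prop :=
  p (HGV.nc x) = some (HGV.nd x) ∧ p (HGV.nc' x) = some (HGV.nd' x)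

end PopMatch

namespace PopMatch

variable {F : Formula}

/-- The assignment associated with a stable matching `M` of `Ĝ_φ`:
`x = true` if the gadget of `¬x` is in false state in `M`, and `x = false`
otherwise. -/
noncomputable def asgnOfH (p : HGV F → Option (HGV F)) : F.Var → Bool :=
  fun x => if NegFalseH p x then true else false

/-- The matching `M_A` of `Ĝ_φ` associated with an assignment `A`: all edges
`(u^ℓ_i, v^ℓ_i)` together with, for every variable `x`, the true-state pairs
of the gadgets of `x` and the false-state pair of the gadget of `¬x` if
`A x = true`, and the false-state pairs of the gadgets of `x` and the
true-state pair of the gadget of `¬x` otherwise. -/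
def MAH (F : Formula) (A : F.Var → Bool) : HGV F → Option (HGV F)
  | HGV.s => none
  | HGV.t => none
  | HGV.u q => some (HGV.vv q)
  | HGV.vv q => some (HGV.u q)
  | HGV.pa o => if A (F.litOf o) then some (HGV.pb o) else some (HGV.pb' o)
  | HGV.pb o => if A (F.litOf o) then some (HGV.pa o) else some (HGV.pa' o)
  | HGV.pa' o => if A (F.litOf o) then some (HGV.pb' o) else some (HGV.pb o)
  | HGV.pb' o => if A (F.litOf o) then some (HGV.pa' o) else some (HGV.pa o)
  | HGV.nc x => if A x then some (HGV.nd x) else some (HGV.nd' x)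
  | HGV.nd x => if A x then some (HGV.nc x) else some (HGV.nc' x)
  | HGV.nc' x => if A x then some (HGV.nd' x) else some (HGV.nd x)
  | HGV.nd' x => if A x then some (HGV.nc' x) else some (HGV.nc x)

end PopMatch

namespace PopMatch
set_option linter.unusedSectionVars false

namespace Inst

variable {V : Type*} [DecidableEq V] [Fintype V] {I : Inst V} {p : V → Option V}

lemma prefOver_of_none {u v : V} (h : p u = none) : I.PrefOver p u v := by
  unfold PrefOver; rw [h]; exact trivial

lemma prefOver_of_some {u v w : V} (h : p u = some w) (hp : I.pref u v w) :
    I.PrefOver p u v := by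
  unfold PrefOver; rw [h]; exact hp

lemma blocked {u v : V} (hM : I.Stable p) (hadj : I.adj u v) (hne : p u ≠ some v)
    (h1 : I.PrefOver p u v) (h2 : I.PrefOver p v u) : False :=
  hM.2 u v ⟨hadj, hne, h1, h2⟩

lemma pref_head {u v w : V} {l : List V} (hl : I.plist u = v :: l)
    (hw : w ∈ l) (hne : w ≠ v) : I.pref u v w := by
  refine ⟨by rw [hl]; exact List.mem_cons_self, by rw [hl]; exact List.mem_cons_of_mem _ hw, ?_⟩
  rw [hl, List.idxOf_cons_self]
  simp [List.idxOf_cons, beq_iff_eq, Ne.symm hne]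

lemma pref_of_indexOf {u v w : V} {l : List V} (hl : I.plist u = l)
    (hv : v ∈ l) (hw : w ∈ l) (hlt : l.idxOf v < l.idxOf w) : I.pref u v w := by
  subst hl; exact ⟨hv, hw, hlt⟩

/-- If there is a set `C` of matched vertices, containing at most one endpoint of
each matching edge and covering every non-matching edge of `G_M`, then there is
no augmenting path. -/
lemma no_aug_of_cover (hp : I.IsMatching p) (C : Finset V)
    (hC1 : ∀ v ∈ C, p v ≠ none)
    (hC2 : ∀ u v, p u = some v → u ∈ C → v ∉ C)
    (hC3 : ∀ u v, I.GMAdj p u v → p u ≠ some v → u ∈ C ∨ v ∈ C) :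
    ¬ I.HasAugPath p := by
  rintro ⟨n, f, hodd, hinj, hadj, halt, h0, hn⟩
  obtain ⟨k, hk⟩ : ∃ k, n = 2 * k + 1 := ⟨n / 2, by omega⟩
  -- for each even-indexed (non-matching) edge, choose an endpoint in C
  have key : ∀ e : Fin (k + 1), ∃ j : ℕ, (j = 2 * e.val ∨ j = 2 * e.val + 1) ∧ f j ∈ C := by
    intro e
    have he : 2 * e.val < n := by have := e.isLt; omega
    have hnm : p (f (2 * e.val)) ≠ some (f (2 * e.val + 1)) := by
      intro h; rw [halt _ he] at h; omega
    rcases hC3 _ _ (hadj _ he) hnm with h | h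
    · exact ⟨2 * e.val, Or.inl rfl, h⟩
    · exact ⟨2 * e.val + 1, Or.inr rfl, h⟩
  choose g hg1 hg2 using key
  -- the chosen index is internal
  have hgpos : ∀ e, 1 ≤ g e ∧ g e ≤ n - 1 := by
    intro e
    have h1 := hg1 e
    have h2 := hg2 e
    have hne0 : g e ≠ 0 := by
      intro h; rw [h] at h2; exact hC1 _ h2 h0
    have hnen : g e ≠ n := by
      intro h; rw [h] at h2; exact hC1 _ h2 hn
    have := e.isLt
    omega
  -- map to the index of the matching edge containing it
  have hmap : ∀ e : Fin (k + 1), (g e - 1) / 2 < k := by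
    intro e
    have := hgpos e
    have := e.isLt
    have h1 := hg1 e
    omega
  rcases Fintype.exists_ne_map_eq_of_card_lt
      (fun e : Fin (k + 1) => (⟨(g e - 1) / 2, hmap e⟩ : Fin k)) (by simp) with
    ⟨e₁, e₂, hne, heq⟩
  -- g is injective as a function to indices
  have hginj : g e₁ ≠ g e₂ := by
    intro h
    apply hne
    have h1 := hg1 e₁; have h2 := hg1 e₂
    apply Fin.ext
    omega
  have heq' : (g e₁ - 1) / 2 = (g e₂ - 1) / 2 := by
    have := congrArg Fin.val heq; simpa using this
  set r := (g e₁ - 1) / 2 with hr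
  have hrk : r < k := hmap e₁
  have hp1 := hgpos e₁; have hp2 := hgpos e₂
  have hg1' := hg1 e₁; have hg2' := hg1 e₂
  -- `{g e₁, g e₂} = {2r+1, 2r+2}`
  have hvals : (g e₁ = 2 * r + 1 ∧ g e₂ = 2 * r + 2) ∨ (g e₁ = 2 * r + 2 ∧ g e₂ = 2 * r + 1) := by
    omega
  have hmatched : p (f (2 * r + 1)) = some (f (2 * r + 2)) := by
    have hlt : 2 * r + 1 < n := by omega
    rw [halt _ hlt]; omega
  rcases hvals with ⟨ha, hb⟩ | ⟨ha, hb⟩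
  · exact hC2 _ _ hmatched (by rw [← ha]; exact hg2 e₁) (by rw [← hb]; exact hg2 e₂)
  · exact hC2 _ _ hmatched (by rw [← hb]; exact hg2 e₂) (by rw [← ha]; exact hg2 e₁)

end Inst
namespace Inst

variable {V : Type*} [DecidableEq V] [Fintype V] {I : Inst V} {p : V → Option V}

lemma flat_pairs_length (ps : List (V × V)) :
    (ps.flatMap fun q => [q.1, q.2]).length = 2 * ps.length := by
  induction ps with
  | nil => simp
  | cons q ps ih => simp only [List.flatMap_cons, List.length_append, List.length_cons, ih]; simp; omega

lemma flat_pairs_getD1 (ps : List (V × V)) (j : ℕ) (h : j < ps.length) (d : V) (dp : V × V) :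
    (ps.flatMap fun q => [q.1, q.2]).getD (2 * j) d = (ps.getD j dp).1 := by
  induction ps generalizing j with
  | nil => simp at h
  | cons q ps ih =>
    cases j with
    | zero => simp
    | succ j =>
      have h' : j < ps.length := by simpa using h
      rw [show 2 * (j + 1) = (2 * j) + 1 + 1 by omega]
      simp only [List.flatMap_cons, List.cons_append, List.getD_cons_succ, List.nil_append]
      exact ih j h'

lemma flat_pairs_getD2 (ps : List (V × V)) (j : ℕ) (h : j < ps.length) (d : V) (dp : V × V) :
    (ps.flatMap fun q => [q.1, q.2]).getD (2 * j + 1) d = (ps.getD j dp).2 := by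
  induction ps generalizing j with
  | nil => simp at h
  | cons q ps ih =>
    cases j with
    | zero => simp
    | succ j =>
      have h' : j < ps.length := by simpa using h
      rw [show 2 * (j + 1) + 1 = (2 * j + 1) + 1 + 1 by omega]
      simp only [List.flatMap_cons, List.cons_append, List.getD_cons_succ, List.nil_append]
      exact ih j h'

/-- Build an augmenting path from an unmatched vertex `a`, a nonempty list of
matching edges `ps`, and an unmatched vertex `b`. -/
lemma hasAug_of_chain (hp : I.IsMatching p) (a b : V) (ps : List (V × V))
    (hne : ps ≠ [])
    (ha : p a = none) (hb : p b = none)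
    (hmatch : ∀ q ∈ ps, p q.1 = some q.2)
    (hnd : (a :: ((ps.flatMap fun q => [q.1, q.2]) ++ [b])).Nodup)
    (hadj0 : I.GMAdj p a (ps.getD 0 (a, a)).1)
    (hadjs : ∀ i : ℕ, i + 1 < ps.length →
      I.GMAdj p ((ps.getD i (a, a)).2) ((ps.getD (i+1) (a, a)).1))
    (hadjb : I.GMAdj p (ps.getD (ps.length - 1) (a, a)).2 b) : I.HasAugPath p := by
  classical
  set L : List V := a :: ((ps.flatMap fun q => [q.1, q.2]) ++ [b]) with hL
  set k := ps.length with hk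
  have hkpos : 0 < k := by rw [hk]; exact List.length_pos_iff.2 hne
  set n := 2 * k + 1 with hn
  have hflen : (ps.flatMap fun q => [q.1, q.2]).length = 2 * k := flat_pairs_length ps
  have hLlen : L.length = n + 1 := by
    rw [hL]
    simp only [List.length_cons, List.length_append, List.length_singleton, List.length_nil, hflen]
    try omega
  set f : ℕ → V := fun i => L.getD i a with hf
  set D : V × V := (a, a) with hD
  have hgetD : ∀ (q : V × V) (l : List V), (q.1 :: q.2 :: l) = [q.1, q.2] ++ l := by intros; rfl
  have hf0 : f 0 = a := by simp [hf, hL]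
  have hfn : f n = b := by
    have h1 : f n = ((ps.flatMap fun q => [q.1, q.2]) ++ [b]).getD (2 * k) a := by
      simp only [hf, hL, hn]
      rw [show 2 * k + 1 = (2 * k) + 1 by rfl, List.getD_cons_succ]
    rw [h1, List.getD_eq_getElem?_getD, List.getElem?_append_right (by omega), hflen]
    simp
  have hfodd : ∀ j, j < k → f (2 * j + 1) = (ps.getD j D).1 := by
    intro j h
    have h1 : f (2 * j + 1) = ((ps.flatMap fun q => [q.1, q.2]) ++ [b]).getD (2 * j) a := by
      simp only [hf, hL]
      rw [List.getD_cons_succ]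
    rw [h1, List.getD_eq_getElem?_getD, List.getElem?_append_left (by rw [flat_pairs_length]; omega),
      ← List.getD_eq_getElem?_getD (a := a), flat_pairs_getD1 ps j h a D]
  have hfeven : ∀ j, j < k → f (2 * j + 2) = (ps.getD j D).2 := by
    intro j h
    have h1 : f (2 * j + 2) = ((ps.flatMap fun q => [q.1, q.2]) ++ [b]).getD (2 * j + 1) a := by
      simp only [hf, hL]
      rw [show 2 * j + 2 = (2 * j + 1) + 1 by rfl, List.getD_cons_succ]
    rw [h1, List.getD_eq_getElem?_getD, List.getElem?_append_left (by rw [flat_pairs_length]; omega),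
      ← List.getD_eq_getElem?_getD (a := a), flat_pairs_getD2 ps j h a D]
  have hfget : ∀ (i : ℕ) (hi : i ≤ n), f i = L[i]'(by rw [hLlen]; omega) := by
    intro i h
    simp [hf, List.getD_eq_getElem?_getD,
      List.getElem?_eq_getElem (show i < L.length by rw [hLlen]; omega)]
  have hinj : ∀ i j, i ≤ n → j ≤ n → f i = f j → i = j := by
    intro i j hi hj hij
    rw [hfget i hi, hfget j hj] at hij
    exact (List.Nodup.getElem_inj_iff hnd).1 hij
  have hmem : ∀ j, j < k → ps.getD j D ∈ ps := by
    intro j h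
    rw [List.getD_eq_getElem?_getD, List.getElem?_eq_getElem (by omega : j < ps.length)]
    exact List.getElem_mem _
  have hmatchD : ∀ j, j < k → p ((ps.getD j D).1) = some ((ps.getD j D).2) :=
    fun j h => hmatch _ (hmem j h)
  have hmsymm : ∀ j, j < k → p ((ps.getD j D).2) = some ((ps.getD j D).1) :=
    fun j h => hp.1 _ _ (hmatchD j h)
  refine ⟨n, f, by omega, hinj, ?_, ?_, by rw [hf0]; exact ha, by rw [hfn]; exact hb⟩
  · -- edges in G_M
    intro i hi
    rcases Nat.even_or_odd i with ⟨j, hj⟩ | ⟨j, hj⟩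
    · rcases Nat.eq_zero_or_pos j with rfl | hjpos
      · have h0 : i = 0 := by omega
        rw [h0, hf0, show (0:ℕ)+1 = 2*0+1 by rfl, hfodd 0 hkpos]
        exact hadj0
      · have hjk : j ≤ k := by omega
        rcases Nat.lt_or_ge j k with hlt | hge
        · rw [show i = 2*(j-1)+2 by omega, hfeven (j-1) (by omega),
            show 2*(j-1)+2+1 = 2*j+1 by omega, hfodd j hlt]
          have := hadjs (j-1) (by omega)
          rw [show j-1+1 = j by omega] at this
          exact this
        · have hjeq : j = k := by omega
          rw [show i = 2*(k-1)+2 by omega, hfeven (k-1) (by omega),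
            show 2*(k-1)+2+1 = n by omega, hfn]
          exact hadjb
    · have hjk : j < k := by omega
      rw [hj, hfodd j hjk, show 2*j+1+1 = 2*j+2 by rfl, hfeven j hjk]
      exact ⟨hp.2 _ _ (hmatchD j hjk), Or.inl (hmatchD j hjk)⟩
  · -- alternation
    intro i hi
    rcases Nat.even_or_odd i with ⟨j, hj⟩ | ⟨j, hj⟩
    · have hieven : i % 2 = 0 := by omega
      rw [hieven]
      simp only [show ¬ (0 = 1) from by omega, iff_false]
      rcases Nat.eq_zero_or_pos j with rfl | hjpos
      · have h0 : i = 0 := by omega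
        rw [h0, hf0, ha]; simp
      · have hjk : j - 1 < k := by omega
        rcases Nat.lt_or_ge j k with hjk' | hge
        · rw [show i = 2*(j-1)+2 by omega, hfeven (j-1) hjk, hmsymm (j-1) hjk,
            show 2*(j-1)+2+1 = 2*j+1 by omega, hfodd j hjk']
          intro hcon
          have hcon' : (ps.getD (j-1) D).1 = (ps.getD j D).1 := by
            injection hcon
          have h1 := hfodd (j-1) hjk
          have h2 := hfodd j hjk'
          have := hinj (2*(j-1)+1) (2*j+1) (by omega) (by omega)
            (by rw [h1, h2]; exact hcon')
          omega
        · rw [show i = 2*(k-1)+2 by omega, hfeven (k-1) (by omega), hmsymm (k-1) (by omega),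
            show 2*(k-1)+2+1 = n by omega, hfn]
          intro hcon
          have hcon' : (ps.getD (k-1) D).1 = b := by injection hcon
          have h1 := hfodd (k-1) (by omega)
          have := hinj (2*(k-1)+1) n (by omega) (by omega) (by rw [h1, hfn]; exact hcon')
          omega
    · have hiodd : i % 2 = 1 := by omega
      rw [hiodd]
      simp only [iff_true]
      have hjk : j < k := by omega
      rw [hj, hfodd j hjk, show 2*j+1+1 = 2*j+2 by rfl, hfeven j hjk]
      exact hmatchD j hjk
end Inst
variable {F : Formula}

/-- The `vv` vertex adjacent to `pa o`. -/
def paVV (o : F.Occ) : HGV F :=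
  .vv ⟨Sum.inl o.1.1, ⟨o.1.2.val, by have := o.2; simp only [clen]; omega⟩⟩

/-- The `u` vertex adjacent to `pb o`. -/
def pbU (o : F.Occ) : HGV F :=
  .u ⟨Sum.inl o.1.1, ⟨o.1.2.val + 1, by have := o.2; simp only [clen]; omega⟩⟩

/-- The `vv` vertex adjacent to `nc x`. -/
def ncVV (x : F.Var) : HGV F :=
  .vv ⟨Sum.inr (F.negIdx x), ⟨if x.val < F.n then 0 else 1, by
    have : clen F (Sum.inr (F.negIdx x)) = 2 := rfl
    rw [this]; split <;> omega⟩⟩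

/-- The `u` vertex adjacent to `nd x`. -/
def ndU (x : F.Var) : HGV F :=
  .u ⟨Sum.inr (F.negIdx x), ⟨if x.val < F.n then 1 else 2, by
    have : clen F (Sum.inr (F.negIdx x)) = 2 := rfl
    rw [this]; split <;> omega⟩⟩

attribute [simp] paVV pbU ncVV ndU

lemma Ghat_plist : (Ghat F).plist = HGV.plist F := rfl

lemma plist_s : (Ghat F).plist .s = (allC F).map (fun ℓ => .u ⟨ℓ, ⟨0, Nat.succ_pos _⟩⟩) := rfl

lemma plist_t : (Ghat F).plist .t = (allC F).map (fun ℓ => .vv ⟨ℓ, ⟨clen F ℓ, Nat.lt_succ_self _⟩⟩) := rfl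

lemma plist_pa (o : F.Occ) : (Ghat F).plist (.pa o) = [.pb o, paVV o, .pb' o] := rfl

lemma plist_pa' (o : F.Occ) : (Ghat F).plist (.pa' o) = [.pb' o, .pb o] := rfl

lemma plist_pb (o : F.Occ) :
    (Ghat F).plist (.pb o) = [.pa' o, .nc (F.litOf o), .pa o, pbU o] := rfl

lemma plist_pb' (o : F.Occ) : (Ghat F).plist (.pb' o) = [.pa o, .pa' o] := rfl

lemma plist_nc (x : F.Var) :
    (Ghat F).plist (.nc x) = .nd x :: (F.occsOfVar x).map HGV.pb ++ [.nd' x, ncVV x] := rfl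

lemma plist_nc' (x : F.Var) : (Ghat F).plist (.nc' x) = [.nd' x, .nd x] := rfl

lemma plist_nd (x : F.Var) : (Ghat F).plist (.nd x) = [.nc' x, ndU x, .nc x] := rfl

lemma plist_nd' (x : F.Var) : (Ghat F).plist (.nd' x) = [.nc x, .nc' x] := rfl

lemma plist_u_inl_zero (i : Fin (F.m + F.n)) (j : Fin (clen F (Sum.inl i) + 1))
    (hj : j.val = 0) :
    (Ghat F).plist (.u ⟨Sum.inl i, j⟩) = [.vv ⟨Sum.inl i, j⟩, .s] := by
  rw [Ghat_plist]
  simp [HGV.plist, hj]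

lemma plist_u_inl_pos (i : Fin (F.m + F.n)) (j : Fin (clen F (Sum.inl i) + 1))
    (hj : j.val ≠ 0) :
    (Ghat F).plist (.u ⟨Sum.inl i, j⟩) =
      [.pb (mkOcc F i (j.val - 1) (by have hj2 := j.isLt; simp only [clen] at hj2; omega)),
       .vv ⟨Sum.inl i, j⟩] := by
  rw [Ghat_plist]
  simp [HGV.plist, hj]

lemma plist_u_inr_zero (k : Fin F.n) (j : Fin (clen F (Sum.inr k) + 1)) (hj : j.val = 0) :
    (Ghat F).plist (.u ⟨Sum.inr k, j⟩) = [.vv ⟨Sum.inr k, j⟩, .s] := by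
  rw [Ghat_plist]
  simp [HGV.plist, hj]

lemma plist_u_inr_pos (k : Fin F.n) (j : Fin (clen F (Sum.inr k) + 1)) (hj : j.val ≠ 0) :
    (Ghat F).plist (.u ⟨Sum.inr k, j⟩) =
      [.vv ⟨Sum.inr k, j⟩, .nd (if j.val = 1 then F.varFst k else F.varSnd k)] := by
  rw [Ghat_plist]
  simp [HGV.plist, hj]

lemma plist_vv_inl_last (i : Fin (F.m + F.n)) (j : Fin (clen F (Sum.inl i) + 1))
    (hj : j.val = (F.posClause i).length) :
    (Ghat F).plist (.vv ⟨Sum.inl i, j⟩) = [.u ⟨Sum.inl i, j⟩, .t] := by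
  rw [Ghat_plist]
  simp [HGV.plist, hj]

lemma plist_vv_inl_mid (i : Fin (F.m + F.n)) (j : Fin (clen F (Sum.inl i) + 1))
    (hj : j.val ≠ (F.posClause i).length) :
    (Ghat F).plist (.vv ⟨Sum.inl i, j⟩) =
      [.u ⟨Sum.inl i, j⟩,
       .pa (mkOcc F i j.val (by have hj2 := j.isLt; simp only [clen] at hj2; omega))] := by
  rw [Ghat_plist]
  simp [HGV.plist, hj]

lemma plist_vv_inr_last (k : Fin F.n) (j : Fin (clen F (Sum.inr k) + 1)) (hj : j.val = 2) :
    (Ghat F).plist (.vv ⟨Sum.inr k, j⟩) = [.u ⟨Sum.inr k, j⟩, .t] := by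
  rw [Ghat_plist]
  simp [HGV.plist, hj]

lemma plist_vv_inr_mid (k : Fin F.n) (j : Fin (clen F (Sum.inr k) + 1)) (hj : j.val ≠ 2) :
    (Ghat F).plist (.vv ⟨Sum.inr k, j⟩) =
      [.nc (if j.val = 0 then F.varFst k else F.varSnd k), .u ⟨Sum.inr k, j⟩] := by
  rw [Ghat_plist]
  simp [HGV.plist, hj]

lemma mem_allC (ℓ : CIdx F) : ℓ ∈ allC F := by
  unfold allC
  rcases ℓ with i | k
  · exact List.mem_append_left _ (List.mem_map_of_mem (List.mem_finRange i))
  · exact List.mem_append_right _ (List.mem_map_of_mem (List.mem_finRange k))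

lemma mem_occList (o : F.Occ) : o ∈ F.occList o.1.1 := by
  unfold Formula.occList
  rcases o with ⟨⟨i, jf⟩, h⟩
  refine List.mem_map.2 ⟨⟨jf.val, h⟩, List.mem_finRange _, ?_⟩
  apply Subtype.ext
  simp

lemma mem_occsOfVar (o : F.Occ) : o ∈ F.occsOfVar (F.litOf o) := by
  unfold Formula.occsOfVar
  rw [List.mem_filter]
  refine ⟨?_, by simp⟩
  rw [List.mem_flatten]
  exact ⟨F.occList o.1.1, List.mem_map_of_mem (List.mem_finRange _), mem_occList o⟩

lemma pb_mem_plist_nc (o : F.Occ) : HGV.pb o ∈ (Ghat F).plist (.nc (F.litOf o)) := by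
  rw [plist_nc]
  exact List.mem_cons_of_mem _ (List.mem_append_left _
    (List.mem_map_of_mem (mem_occsOfVar o)))
section Struct

variable {F : Formula} {M : HGV F → Option (HGV F)}

lemma msymm (hM : (Ghat F).Stable M) {u v : HGV F} (h : M u = some v) : M v = some u :=
  hM.1.1 u v h

lemma pmem (hM : (Ghat F).Stable M) {u v : HGV F} (h : M u = some v) :
    v ∈ (Ghat F).plist u := (hM.1.2 u v h).1

/-- A vertex always weakly prefers its top choice. -/
lemma prefOver_top (hM : (Ghat F).Stable M) {v w : HGV F} {l : List (HGV F)}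
    (hl : (Ghat F).plist v = w :: l) (hv : M v ≠ some w) : (Ghat F).PrefOver M v w := by
  cases h : M v with
  | none => exact Inst.prefOver_of_none h
  | some z =>
    have hz := pmem hM h
    rw [hl] at hz
    rcases List.mem_cons.1 hz with rfl | hz
    · exact absurd h hv
    · exact Inst.prefOver_of_some h (Inst.pref_head hl hz (by rintro rfl; exact hv h))

lemma pb'_partner (hM : (Ghat F).Stable M) (o : F.Occ) :
    M (.pb' o) = some (.pa o) ∨ M (.pb' o) = some (.pa' o) := by
  rcases h : M (.pb' o) with _ | w
  · exfalso
    refine Inst.blocked hM (u := .pa' o) (v := .pb' o)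
      ⟨by rw [plist_pa']; simp, by rw [plist_pb']; simp⟩
      (fun hc => by rw [msymm hM hc] at h; exact nomatch h)
      (prefOver_top hM (plist_pa' o)
        (fun hc => by rw [msymm hM hc] at h; exact nomatch h))
      (Inst.prefOver_of_none h)
  · have hw := pmem hM h
    rw [plist_pb'] at hw
    simp only [List.mem_cons, List.not_mem_nil, or_false] at hw
    rcases hw with rfl | rfl
    · exact Or.inl rfl
    · exact Or.inr rfl

lemma pb_partner (hM : (Ghat F).Stable M) (o : F.Occ) :
    M (.pb o) = some (.pa o) ∨ M (.pb o) = some (.pa' o) ∨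
      M (.pb o) = some (.nc (F.litOf o)) := by
  rcases pb'_partner hM o with hb' | hb'
  · -- b'–a, force a'–b
    have ha : M (.pa o) = some (.pb' o) := msymm hM hb'
    rcases h : M (.pa' o) with _ | w
    · exfalso
      refine Inst.blocked hM (u := .pa' o) (v := .pb o)
        ⟨by rw [plist_pa']; simp, by rw [plist_pb]; simp⟩
        (by rw [h]; simp)
        (Inst.prefOver_of_none h)
        (prefOver_top hM (plist_pb o)
          (fun hc => by rw [msymm hM hc] at h; exact nomatch h))
    · have hw := pmem hM h
      rw [plist_pa'] at hw
      simp only [List.mem_cons, List.not_mem_nil, or_false] at hw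
      rcases hw with rfl | rfl
      · rw [msymm hM h] at hb'; simp at hb'
      · exact Or.inr (Or.inl (msymm hM h))
  · -- b'–a'
    have ha' : M (.pa' o) = some (.pb' o) := msymm hM hb'
    rcases h : M (.pa o) with _ | w
    · exfalso
      refine Inst.blocked hM (u := .pa o) (v := .pb' o)
        ⟨by rw [plist_pa]; simp, by rw [plist_pb']; simp⟩
        (by rw [h]; simp)
        (Inst.prefOver_of_none h)
        (Inst.prefOver_of_some hb' (Inst.pref_head (plist_pb' o) (by simp) (by simp)))
    · have hw := pmem hM h
      rw [plist_pa] at hw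
      simp only [List.mem_cons, List.not_mem_nil, or_false] at hw
      rcases hw with rfl | rfl | rfl
      · exact Or.inl (msymm hM h)
      · -- a matched to its vv: then b is matched to c
        rcases h2 : M (.pb o) with _ | z
        · exfalso
          refine Inst.blocked hM (u := .pa o) (v := .pb o)
            ⟨by rw [plist_pa]; simp, by rw [plist_pb]; simp⟩
            (by rw [h]; simp)
            (prefOver_top hM (plist_pa o) (by rw [h]; simp))
            (Inst.prefOver_of_none h2)
        · have hz := pmem hM h2
          rw [plist_pb] at hz
          simp only [List.mem_cons, List.not_mem_nil, or_false] at hz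
          rcases hz with rfl | rfl | rfl | rfl
          · exact Or.inr (Or.inl rfl)
          · exact Or.inr (Or.inr rfl)
          · rw [msymm hM h2] at h; simp at h
          · exfalso
            refine Inst.blocked hM (u := .pa o) (v := .pb o)
              ⟨by rw [plist_pa]; simp, by rw [plist_pb]; simp⟩
              (by rw [h]; simp)
              (prefOver_top hM (plist_pa o) (by rw [h]; simp))
              (Inst.prefOver_of_some h2 (Inst.pref_of_indexOf (plist_pb o) (by simp) (by simp)
                (by simp [List.idxOf_cons_self, List.idxOf_cons_ne])))
      · rw [msymm hM h] at hb'; simp at hb'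

lemma t_unmatched (hM : (Ghat F).Stable M) : M .t = none := by
  rcases h : M .t with _ | w
  · rfl
  exfalso
  have hw := pmem hM h
  rw [plist_t] at hw
  rcases List.mem_map.1 hw with ⟨ℓ, hℓ, rfl⟩
  set jf : Fin (clen F ℓ + 1) := ⟨clen F ℓ, Nat.lt_succ_self _⟩ with hjf
  have hjv : jf.val = clen F ℓ := rfl
  have hvt : M (.vv ⟨ℓ, jf⟩) = some .t := msymm hM h
  have hne : M (.u ⟨ℓ, jf⟩) ≠ some (.vv ⟨ℓ, jf⟩) := by
    intro hc
    rw [msymm hM hc] at hvt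
    simp at hvt
  have hcl : 1 ≤ clen F ℓ := by
    rcases ℓ with i | k
    · have := List.length_pos_iff.2 (F.posClause_ne_nil i)
      simpa [clen, Nat.one_le_iff_ne_zero, Nat.pos_iff_ne_zero] using this
    · simp [clen]
  refine Inst.blocked hM (u := .u ⟨ℓ, jf⟩) (v := .vv ⟨ℓ, jf⟩) ⟨?_, ?_⟩ hne ?_ ?_
  · -- vv ∈ plist u
    rcases ℓ with i | k
    · rw [plist_u_inl_pos i jf (by rw [hjv]; omega)]; simp
    · rw [plist_u_inr_pos k jf (by rw [hjv]; omega)]; simp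
  · -- u ∈ plist vv
    rcases ℓ with i | k
    · rw [plist_vv_inl_last i jf (by rw [hjv]; simp [clen])]; simp
    · rw [plist_vv_inr_last k jf (by rw [hjv]; simp [clen])]; simp
  · -- u prefers vv over its situation
    rcases ℓ with i | k
    · rcases hu : M (.u ⟨Sum.inl i, jf⟩) with _ | z
      · exact Inst.prefOver_of_none hu
      · have hz := pmem hM hu
        rw [plist_u_inl_pos i jf (by rw [hjv]; omega)] at hz
        simp only [List.mem_cons, List.not_mem_nil, or_false] at hz
        rcases hz with rfl | rfl
        · exfalso
          rcases pb_partner hM (mkOcc F i (jf.val - 1) _) with hc | hc | hc <;>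
            (rw [msymm hM hu] at hc; simp at hc)
        · exact absurd hu hne
    · rcases hu : M (.u ⟨Sum.inr k, jf⟩) with _ | z
      · exact Inst.prefOver_of_none hu
      · exact prefOver_top hM (plist_u_inr_pos k jf (by rw [hjv]; omega)) hne
  · -- vv (matched to t) prefers u over t
    rcases ℓ with i | k
    · exact Inst.prefOver_of_some hvt
        (Inst.pref_head (plist_vv_inl_last i jf (by rw [hjv]; simp [clen])) (by simp) (by simp))
    · exact Inst.prefOver_of_some hvt
        (Inst.pref_head (plist_vv_inr_last k jf (by rw [hjv]; simp [clen])) (by simp) (by simp))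

end Struct
section Struct2

variable {F : Formula} {M : HGV F → Option (HGV F)}

lemma varFst_lt (k : Fin F.n) : (F.varFst k).val < F.n := k.isLt

lemma varSnd_not_lt (k : Fin F.n) : ¬ (F.varSnd k).val < F.n := by
  simp [Formula.varSnd]

lemma negIdx_varFst (k : Fin F.n) : F.negIdx (F.varFst k) = k := by
  simp [Formula.negIdx, Formula.varFst, k.isLt]

lemma negIdx_varSnd (k : Fin F.n) : F.negIdx (F.varSnd k) = k := by
  simp [Formula.negIdx, Formula.varSnd]

lemma varFst_negIdx {x : F.Var} (hx : x.val < F.n) : F.varFst (F.negIdx x) = x := by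
  simp [Formula.negIdx, Formula.varFst, hx]

lemma varSnd_negIdx {x : F.Var} (hx : ¬ x.val < F.n) : F.varSnd (F.negIdx x) = x := by
  have := x.isLt
  simp only [Formula.negIdx, Formula.varSnd, dif_neg hx]
  apply Fin.ext
  simp
  omega

lemma ncVV_lt {x : F.Var} (hx : x.val < F.n) :
    ncVV x = .vv ⟨Sum.inr (F.negIdx x), ⟨0, Nat.succ_pos _⟩⟩ := by
  simp [ncVV, hx]

lemma ncVV_ge {x : F.Var} (hx : ¬ x.val < F.n) :
    ncVV x = .vv ⟨Sum.inr (F.negIdx x), ⟨1, by simp only [clen]; omega⟩⟩ := by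
  simp [ncVV, hx]

lemma ndU_lt {x : F.Var} (hx : x.val < F.n) :
    ndU x = .u ⟨Sum.inr (F.negIdx x), ⟨1, by simp only [clen]; omega⟩⟩ := by
  simp [ndU, hx]

lemma ndU_ge {x : F.Var} (hx : ¬ x.val < F.n) :
    ndU x = .u ⟨Sum.inr (F.negIdx x), ⟨2, by simp only [clen]; omega⟩⟩ := by
  simp [ndU, hx]

lemma pref_nc_pb_nd' (x : F.Var) (o : F.Occ) (ho : o ∈ F.occsOfVar x) :
    (Ghat F).pref (.nc x) (.pb o) (.nd' x) := by
  have hmem : HGV.pb o ∈ (F.occsOfVar x).map HGV.pb := List.mem_map_of_mem ho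
  refine Inst.pref_of_indexOf (plist_nc x)
    (List.mem_cons_of_mem _ (List.mem_append_left _ hmem)) (by simp) ?_
  have hmem0 : HGV.pb o ∈ HGV.nd x :: (F.occsOfVar x).map HGV.pb :=
    List.mem_cons_of_mem _ hmem
  have h1 := List.idxOf_append_of_mem (l₂ := [HGV.nd' x, ncVV x]) hmem0
  have h2 := List.idxOf_append_of_notMem
    (l₂ := [HGV.nd' x, ncVV x]) (a := HGV.nd' x)
    (by simp : HGV.nd' x ∉ HGV.nd x :: (F.occsOfVar x).map HGV.pb)
  have h3 := List.idxOf_lt_length_iff.2 hmem0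
  rw [h1, h2]
  simp only [List.idxOf_cons_self]
  omega

lemma pref_nc_pb_vv (x : F.Var) (o : F.Occ) (ho : o ∈ F.occsOfVar x) :
    (Ghat F).pref (.nc x) (.pb o) (ncVV x) := by
  have hmem : HGV.pb o ∈ (F.occsOfVar x).map HGV.pb := List.mem_map_of_mem ho
  refine Inst.pref_of_indexOf (plist_nc x)
    (List.mem_cons_of_mem _ (List.mem_append_left _ hmem)) (by simp) ?_
  have hmem0 : HGV.pb o ∈ HGV.nd x :: (F.occsOfVar x).map HGV.pb :=
    List.mem_cons_of_mem _ hmem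
  have h1 := List.idxOf_append_of_mem (l₂ := [HGV.nd' x, ncVV x]) hmem0
  have h2 := List.idxOf_append_of_notMem
    (l₂ := [HGV.nd' x, ncVV x]) (a := ncVV x)
    (by simp : ncVV x ∉ HGV.nd x :: (F.occsOfVar x).map HGV.pb)
  have h3 := List.idxOf_lt_length_iff.2 hmem0
  rw [h1, h2]
  have e3 : List.idxOf (ncVV x) [HGV.nd' x, ncVV x]
      = List.idxOf (ncVV x) [ncVV x] + 1 := List.idxOf_cons_ne _ (by simp)
  rw [e3, List.idxOf_cons_self]
  omega

/-- If `nc x` is matched, its partner lies outside its own gadget only at the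
cost of a contradiction: first step, `nd' x` must be matched to `nc' x`. -/
lemma nc_external_aux (hM : (Ghat F).Stable M) (x : F.Var) {w : HGV F}
    (h : M (.nc x) = some w) (hw1 : w ≠ .nd x) (hw2 : w ≠ .nd' x) :
    M (.nd' x) = some (.nc' x) ∧ M (.nd x) = some (ndU x) := by
  have hwmem := pmem hM h
  rw [plist_nc] at hwmem
  -- d' is matched to c'
  have hd' : M (.nd' x) = some (.nc' x) := by
    rcases hd' : M (.nd' x) with _ | z
    · exfalso
      refine Inst.blocked hM (u := .nc' x) (v := .nd' x)
        ⟨by rw [plist_nc']; simp, by rw [plist_nd']; simp⟩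
        (fun hc => by rw [msymm hM hc] at hd'; exact nomatch hd')
        (prefOver_top hM (plist_nc' x)
          (fun hc => by rw [msymm hM hc] at hd'; exact nomatch hd'))
        (Inst.prefOver_of_none hd')
    · have hz := pmem hM hd'
      rw [plist_nd'] at hz
      simp only [List.mem_cons, List.not_mem_nil, or_false] at hz
      rcases hz with rfl | rfl
      · exfalso
        rw [msymm hM hd'] at h
        simp at h
        exact hw2 h.symm
      · rfl
  refine ⟨hd', ?_⟩
  -- d is matched to its u vertex
  rcases hd : M (.nd x) with _ | z
  · exfalso
    refine Inst.blocked hM (u := .nc x) (v := .nd x)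
      ⟨by rw [plist_nc]; simp, by rw [plist_nd]; simp⟩
      (by rw [h]; simp [hw1])
      (Inst.prefOver_of_some h (Inst.pref_head (plist_nc x)
        (by rcases List.mem_cons.1 hwmem with rfl | hm
            · exact absurd rfl hw1
            · exact hm)
        hw1))
      (Inst.prefOver_of_none hd)
  · have hz := pmem hM hd
    rw [plist_nd] at hz
    simp only [List.mem_cons, List.not_mem_nil, or_false] at hz
    rcases hz with rfl | rfl | rfl
    · exfalso
      have h1 := msymm hM hd'
      rw [msymm hM hd] at h1
      simp at h1
    · rfl
    · exfalso
      rw [msymm hM hd] at h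
      simp at h
      exact hw1 h.symm

/-- The partner of `nc x` is inside its own gadget, for `x` with a second-type
negated occurrence. -/
lemma nc_partner_ge (hM : (Ghat F).Stable M) (x : F.Var) (hx : ¬ x.val < F.n) {w : HGV F}
    (h : M (.nc x) = some w) : w = .nd x ∨ w = .nd' x := by
  by_contra hcon
  push_neg at hcon
  obtain ⟨hd', hd⟩ := nc_external_aux hM x h hcon.1 hcon.2
  rw [ndU_ge hx] at hd
  -- now consider vv ⟨inr k, 2⟩
  set vv2 : HGV F := .vv ⟨Sum.inr (F.negIdx x), ⟨2, by simp only [clen]; omega⟩⟩ with hvv2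
  rcases hv : M vv2 with _ | z
  · -- (vv2, t) blocks
    refine Inst.blocked hM (u := vv2) (v := .t)
      ⟨?_, ?_⟩ (by rw [hv]; simp) (Inst.prefOver_of_none hv)
      (Inst.prefOver_of_none (t_unmatched hM))
    · rw [hvv2, plist_vv_inr_last _ _ rfl]; simp
    · rw [plist_t]
      refine List.mem_map.2 ⟨Sum.inr (F.negIdx x), mem_allC _, rfl⟩
  · have hz := pmem hM hv
    rw [hvv2, plist_vv_inr_last _ _ rfl] at hz
    simp only [List.mem_cons, List.not_mem_nil, or_false] at hz
    rcases hz with rfl | rfl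
    · have h1 := msymm hM hv
      have h2 := msymm hM hd
      have h3 := h1.symm.trans h2
      simp [hvv2] at h3
    · exact absurd (msymm hM hv) (by rw [t_unmatched hM]; simp)

/-- The partner of `nc x` is always inside its own gadget. -/
lemma nc_partner (hM : (Ghat F).Stable M) (x : F.Var) {w : HGV F}
    (h : M (.nc x) = some w) : w = .nd x ∨ w = .nd' x := by
  by_cases hx : x.val < F.n
  · by_contra hcon
    push_neg at hcon
    obtain ⟨hd', hd⟩ := nc_external_aux hM x h hcon.1 hcon.2
    rw [ndU_lt hx] at hd
    set vv1 : HGV F := .vv ⟨Sum.inr (F.negIdx x), ⟨1, by simp only [clen]; omega⟩⟩ with hvv1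
    have hu1 : M (.u ⟨Sum.inr (F.negIdx x), ⟨1, by simp only [clen]; omega⟩⟩) = some (.nd x) := msymm hM hd
    rcases hv : M vv1 with _ | z
    · -- (u1, vv1) blocks
      refine Inst.blocked hM (u := .u ⟨Sum.inr (F.negIdx x), ⟨1, by simp only [clen]; omega⟩⟩) (v := vv1)
        ⟨?_, ?_⟩ (by rw [hu1]; simp [hvv1]) ?_ (Inst.prefOver_of_none hv)
      · rw [plist_u_inr_pos _ _ (by simp)]; simp [hvv1]
      · rw [hvv1, plist_vv_inr_mid _ _ (by simp)]; simp
      · exact Inst.prefOver_of_some hu1 (Inst.pref_head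
          (plist_u_inr_pos _ _ (by simp)) (by simp [varFst_negIdx hx]) (by simp [hvv1]))
    · have hz := pmem hM hv
      rw [hvv1, plist_vv_inr_mid _ _ (by simp)] at hz
      simp only [List.mem_cons, List.not_mem_nil, or_false] at hz
      rcases hz with rfl | rfl
      · -- vv1 matched to nc (varSnd k): contradiction by the `ge` case
        have h1 := msymm hM hv
        rcases nc_partner_ge hM _ (varSnd_not_lt _) h1 with hc | hc <;>
          simp [hvv1] at hc
      · have h1 := msymm hM hv
        have h3 := h1.symm.trans hu1
        simp [hvv1] at h3
  · exact nc_partner_ge hM x hx h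

/-- Every negative gadget is in true state or false state. -/
lemma neg_state (hM : (Ghat F).Stable M) (x : F.Var) :
    NegTrueH M x ∨ NegFalseH M x := by
  rcases hd' : M (.nd' x) with _ | z
  · exfalso
    refine Inst.blocked hM (u := .nc' x) (v := .nd' x)
      ⟨by rw [plist_nc']; simp, by rw [plist_nd']; simp⟩
      (fun hc => by rw [msymm hM hc] at hd'; exact nomatch hd')
      (prefOver_top hM (plist_nc' x)
        (fun hc => by rw [msymm hM hc] at hd'; exact nomatch hd'))
      (Inst.prefOver_of_none hd')
  have hz := pmem hM hd'
  rw [plist_nd'] at hz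
  simp only [List.mem_cons, List.not_mem_nil, or_false] at hz
  rcases hz with rfl | rfl
  · -- d'–c : true state; show c'–d
    left
    have hc : M (.nc x) = some (.nd' x) := msymm hM hd'
    refine ⟨hc, ?_⟩
    rcases hc' : M (.nc' x) with _ | z
    · exfalso
      refine Inst.blocked hM (u := .nc' x) (v := .nd x)
        ⟨by rw [plist_nc']; simp, by rw [plist_nd]; simp⟩
        (by rw [hc']; simp)
        (Inst.prefOver_of_none hc') ?_
      rcases hdd : M (.nd x) with _ | zz
      · exact Inst.prefOver_of_none hdd
      · have hzz := pmem hM hdd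
        rw [plist_nd] at hzz
        simp only [List.mem_cons, List.not_mem_nil, or_false] at hzz
        rcases hzz with rfl | rfl | rfl
        · exfalso; rw [msymm hM hdd] at hc'; exact nomatch hc'
        · exact Inst.prefOver_of_some hdd
            (Inst.pref_head (plist_nd x) (by simp) (by simp))
        · exfalso; rw [msymm hM hdd] at hc; simp at hc
    · have hzz := pmem hM hc'
      rw [plist_nc'] at hzz
      simp only [List.mem_cons, List.not_mem_nil, or_false] at hzz
      rcases hzz with rfl | rfl
      · exfalso; rw [msymm hM hc'] at hd'; simp at hd'
      · rfl
  · -- d'–c' : show c–d (false state)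
    right
    have hc' : M (.nc' x) = some (.nd' x) := msymm hM hd'
    refine ⟨?_, hc'⟩
    rcases hcc : M (.nc x) with _ | w
    · exfalso
      refine Inst.blocked hM (u := .nc x) (v := .nd' x)
        ⟨by rw [plist_nc]; simp, by rw [plist_nd']; simp⟩
        (by rw [hcc]; simp)
        (Inst.prefOver_of_none hcc)
        (Inst.prefOver_of_some hd' (Inst.pref_head (plist_nd' x) (by simp) (by simp)))
    · rcases nc_partner hM x hcc with rfl | rfl
      · rfl
      · exfalso; rw [msymm hM hcc] at hd'; simp at hd'

/-- The partner of `pa o` is `pb o` or `pb' o`. -/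
lemma pa_partner (hM : (Ghat F).Stable M) (o : F.Occ) :
    M (.pa o) = some (.pb o) ∨ M (.pa o) = some (.pb' o) := by
  rcases h : M (.pa o) with _ | w
  · exfalso
    rcases pb'_partner hM o with hb' | hb'
    · have := msymm hM hb'; rw [h] at this; exact nomatch this
    · refine Inst.blocked hM (u := .pa o) (v := .pb' o)
        ⟨by rw [plist_pa]; simp, by rw [plist_pb']; simp⟩
        (by rw [h]; simp)
        (Inst.prefOver_of_none h)
        (Inst.prefOver_of_some hb' (Inst.pref_head (plist_pb' o) (by simp) (by simp)))
  · have hw := pmem hM h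
    rw [plist_pa] at hw
    simp only [List.mem_cons, List.not_mem_nil, or_false] at hw
    rcases hw with rfl | rfl | rfl
    · exact Or.inl rfl
    · exfalso
      rcases pb_partner hM o with hb | hb | hb
      · rw [msymm hM hb] at h; simp at h
      · have h1 := msymm hM hb
        rcases pb'_partner hM o with hb' | hb'
        · rw [msymm hM hb'] at h; simp at h
        · rw [msymm hM hb'] at h1; simp at h1
      · have := msymm hM hb
        rcases nc_partner hM _ this with hc | hc <;> simp at hc
    · exact Or.inr rfl

lemma s_unmatched (hM : (Ghat F).Stable M) : M .s = none := by
  rcases h : M .s with _ | w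
  · rfl
  exfalso
  have hw := pmem hM h
  rw [plist_s] at hw
  rcases List.mem_map.1 hw with ⟨ℓ, hℓ, rfl⟩
  have hu : M (.u ⟨ℓ, ⟨0, Nat.succ_pos _⟩⟩) = some .s := msymm hM h
  have hne : M (.u ⟨ℓ, ⟨0, Nat.succ_pos _⟩⟩) ≠ some (.vv ⟨ℓ, ⟨0, Nat.succ_pos _⟩⟩) := by
    rw [hu]; simp
  refine Inst.blocked hM (u := .u ⟨ℓ, ⟨0, Nat.succ_pos _⟩⟩)
    (v := .vv ⟨ℓ, ⟨0, Nat.succ_pos _⟩⟩) ⟨?_, ?_⟩ hne ?_ ?_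
  · rcases ℓ with i | k
    · rw [plist_u_inl_zero i _ rfl]; simp
    · rw [plist_u_inr_zero k _ rfl]; simp
  · rcases ℓ with i | k
    · rw [plist_vv_inl_mid i _ (by
        have := List.length_pos_iff.2 (F.posClause_ne_nil i); simp; omega)]; simp
    · rw [plist_vv_inr_mid k _ (by simp)]; simp
  · -- u prefers vv to s
    rcases ℓ with i | k
    · exact Inst.prefOver_of_some hu
        (Inst.pref_head (plist_u_inl_zero i _ rfl) (by simp) (by simp))
    · exact Inst.prefOver_of_some hu
        (Inst.pref_head (plist_u_inr_zero k _ rfl) (by simp) (by simp))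
  · -- vv's vote
    rcases hv : M (.vv ⟨ℓ, ⟨0, Nat.succ_pos _⟩⟩) with _ | z
    · exact Inst.prefOver_of_none hv
    · have hz := pmem hM hv
      rcases ℓ with i | k
      · rw [plist_vv_inl_mid i _ (by
          have := List.length_pos_iff.2 (F.posClause_ne_nil i); simp; omega)] at hz
        simp only [List.mem_cons, List.not_mem_nil, or_false] at hz
        rcases hz with rfl | rfl
        · exfalso; rw [msymm hM hv] at hu; simp at hu
        · exact Inst.prefOver_of_some hv (Inst.pref_head (plist_vv_inl_mid i _ (by
            have := List.length_pos_iff.2 (F.posClause_ne_nil i); simp; omega)) (by simp) (by simp))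
      · rw [plist_vv_inr_mid k _ (by simp)] at hz
        simp only [List.mem_cons, List.not_mem_nil, or_false] at hz
        rcases hz with rfl | rfl
        · exfalso
          rcases nc_partner hM _ (msymm hM hv) with hc | hc <;> simp at hc
        · exfalso; rw [msymm hM hv] at hu; simp at hu

end Struct2
section Struct3

variable {F : Formula} {M : HGV F → Option (HGV F)}

lemma uv_matched (hM : (Ghat F).Stable M) (ℓ : CIdx F) (j : Fin (clen F ℓ + 1)) :
    M (.u ⟨ℓ, j⟩) = some (.vv ⟨ℓ, j⟩) := by
  have hu : M (.u ⟨ℓ, j⟩) = some (.vv ⟨ℓ, j⟩) ∨ M (.u ⟨ℓ, j⟩) = none := by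
    rcases h : M (.u ⟨ℓ, j⟩) with _ | w
    · exact Or.inr rfl
    · left
      have hw := pmem hM h
      rcases ℓ with i | k
      · by_cases h0 : j.val = 0
        · rw [plist_u_inl_zero i j h0] at hw
          simp only [List.mem_cons, List.not_mem_nil, or_false] at hw
          rcases hw with rfl | rfl
          · rfl
          · exfalso
            have := msymm hM h
            rw [s_unmatched hM] at this
            exact nomatch this
        · rw [plist_u_inl_pos i j h0] at hw
          simp only [List.mem_cons, List.not_mem_nil, or_false] at hw
          rcases hw with rfl | rfl
          · exfalso
            rcases pb_partner hM _ with hc | hc | hc <;>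
              (rw [msymm hM h] at hc; simp at hc)
          · rfl
      · by_cases h0 : j.val = 0
        · rw [plist_u_inr_zero k j h0] at hw
          simp only [List.mem_cons, List.not_mem_nil, or_false] at hw
          rcases hw with rfl | rfl
          · rfl
          · exfalso
            have := msymm hM h
            rw [s_unmatched hM] at this
            exact nomatch this
        · rw [plist_u_inr_pos k j h0] at hw
          simp only [List.mem_cons, List.not_mem_nil, or_false] at hw
          rcases hw with rfl | rfl
          · rfl
          · exfalso
            have hnd := msymm hM h
            rcases neg_state hM (if j.val = 1 then F.varFst k else F.varSnd k) with hS | hS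
            · have := msymm hM hS.2
              rw [hnd] at this
              simp at this
            · have := msymm hM hS.1
              rw [hnd] at this
              simp at this
  rcases hu with hu | hu
  · exact hu
  exfalso
  rcases hv : M (.vv ⟨ℓ, j⟩) with _ | z
  · -- (u,vv) blocks
    refine Inst.blocked hM (u := .u ⟨ℓ, j⟩) (v := .vv ⟨ℓ, j⟩) ⟨?_, ?_⟩
      (by rw [hu]; simp) (Inst.prefOver_of_none hu) (Inst.prefOver_of_none hv)
    · rcases ℓ with i | k
      · by_cases h0 : j.val = 0
        · rw [plist_u_inl_zero i j h0]; simp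
        · rw [plist_u_inl_pos i j h0]; simp
      · by_cases h0 : j.val = 0
        · rw [plist_u_inr_zero k j h0]; simp
        · rw [plist_u_inr_pos k j h0]; simp
    · rcases ℓ with i | k
      · by_cases h0 : j.val = (F.posClause i).length
        · rw [plist_vv_inl_last i j h0]; simp
        · rw [plist_vv_inl_mid i j h0]; simp
      · by_cases h0 : j.val = 2
        · rw [plist_vv_inr_last k j h0]; simp
        · rw [plist_vv_inr_mid k j h0]; simp
  · have hz := pmem hM hv
    rcases ℓ with i | k
    · by_cases h0 : j.val = (F.posClause i).length
      · rw [plist_vv_inl_last i j h0] at hz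
        simp only [List.mem_cons, List.not_mem_nil, or_false] at hz
        rcases hz with rfl | rfl
        · rw [msymm hM hv] at hu; exact nomatch hu
        · have := msymm hM hv
          rw [t_unmatched hM] at this
          exact nomatch this
      · rw [plist_vv_inl_mid i j h0] at hz
        simp only [List.mem_cons, List.not_mem_nil, or_false] at hz
        rcases hz with rfl | rfl
        · rw [msymm hM hv] at hu; exact nomatch hu
        · rcases pa_partner hM _ with hc | hc <;>
            (rw [msymm hM hv] at hc; simp at hc)
    · by_cases h0 : j.val = 2
      · rw [plist_vv_inr_last k j h0] at hz
        simp only [List.mem_cons, List.not_mem_nil, or_false] at hz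
        rcases hz with rfl | rfl
        · rw [msymm hM hv] at hu; exact nomatch hu
        · have := msymm hM hv
          rw [t_unmatched hM] at this
          exact nomatch this
      · rw [plist_vv_inr_mid k j h0] at hz
        simp only [List.mem_cons, List.not_mem_nil, or_false] at hz
        rcases hz with rfl | rfl
        · rcases nc_partner hM _ (msymm hM hv) with hc | hc <;> simp at hc
        · rw [msymm hM hv] at hu; exact nomatch hu

lemma pa_partner_cases {o : F.Occ} {w : HGV F} (hM : (Ghat F).Stable M)
    (h : M (.pa o) = some w) : w = .pb o ∨ w = .pb' o := by
  rcases pa_partner hM o with hc | hc <;> rw [h] at hc <;> simp at hc <;> tauto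

lemma posFalse_of_negTrue (hM : (Ghat F).Stable M) (o : F.Occ)
    (hN : NegTrueH M (F.litOf o)) : PosFalseH M o := by
  rcases pb_partner hM o with hb | hb | hb
  · exfalso
    refine Inst.blocked hM (u := .pb o) (v := .nc (F.litOf o))
      ⟨by rw [plist_pb]; simp, pb_mem_plist_nc o⟩
      (by rw [hb]; simp) ?_ ?_
    · exact Inst.prefOver_of_some hb (Inst.pref_of_indexOf (plist_pb o) (by simp) (by simp)
        (by rw [List.idxOf_cons_ne _ (by simp : HGV.pa' o ≠ HGV.nc (F.litOf o)),
              List.idxOf_cons_self,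
              List.idxOf_cons_ne _ (by simp : HGV.pa' o ≠ HGV.pa o),
              List.idxOf_cons_ne _ (by simp : HGV.nc (F.litOf o) ≠ HGV.pa o),
              List.idxOf_cons_self]
            omega))
    · exact Inst.prefOver_of_some hN.1 (pref_nc_pb_nd' _ o (mem_occsOfVar o))
  · have h1 := msymm hM hb
    rcases pa_partner hM o with h2 | h2
    · exfalso
      have h3 := msymm hM h2
      rw [hb] at h3
      simp at h3
    · exact ⟨h2, h1⟩
  · exfalso
    have := msymm hM hb
    rw [hN.1] at this
    simp at this

end Struct3
section PathNeg

variable {F : Formula} {M : HGV F → Option (HGV F)}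

/-- `u`-vertex of the negative clause `k`, position `j`. -/
def nU (k : Fin F.n) (j : ℕ) (hj : j < 3) : HGV F :=
  .u ⟨Sum.inr k, ⟨j, by simp only [clen]; omega⟩⟩

/-- `v`-vertex of the negative clause `k`, position `j`. -/
def nV (k : Fin F.n) (j : ℕ) (hj : j < 3) : HGV F :=
  .vv ⟨Sum.inr k, ⟨j, by simp only [clen]; omega⟩⟩

attribute [simp] nU nV

lemma nuv_matched (hM : (Ghat F).Stable M) (k : Fin F.n) (j : ℕ) (hj : j < 3) :
    M (nU k j hj) = some (nV k j hj) := uv_matched hM _ _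

lemma gm_s_nu (hM : (Ghat F).Stable M) (k : Fin F.n) :
    (Ghat F).GMAdj M .s (nU k 0 (by omega)) := by
  unfold nU
  refine ⟨⟨?_, ?_⟩, Or.inr (Or.inl (Inst.prefOver_of_none (s_unmatched hM)))⟩
  · rw [plist_s]
    exact List.mem_map.2 ⟨Sum.inr k, mem_allC _, rfl⟩
  · rw [plist_u_inr_zero k _ rfl]; simp

lemma gm_nv_nc (hM : (Ghat F).Stable M) (k : Fin F.n) (j : ℕ) (hj : j < 2)
    (x : F.Var) (hx : x = if j = 0 then F.varFst k else F.varSnd k) :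
    (Ghat F).GMAdj M (nV k j (by omega)) (.nc x) := by
  have huv := msymm hM (nuv_matched hM k j (by omega))
  unfold nV at huv ⊢
  rcases (by omega : j = 0 ∨ j = 1) with rfl | rfl
  · simp only [reduceIte] at hx
    subst hx
    have hl : (Ghat F).plist (.vv ⟨Sum.inr k, ⟨0, by simp only [clen]; omega⟩⟩)
        = [.nc (F.varFst k), .u ⟨Sum.inr k, ⟨0, by simp only [clen]; omega⟩⟩] := by
      rw [plist_vv_inr_mid k _ (by simp)]
      simp
    refine ⟨⟨?_, ?_⟩, Or.inr (Or.inl ?_)⟩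
    · rw [hl]; simp
    · rw [plist_nc]
      refine List.mem_append_right _ ?_
      rw [ncVV_lt (varFst_lt k), negIdx_varFst]
      simp
    · exact Inst.prefOver_of_some huv (Inst.pref_head hl (by simp) (by simp))
  · simp only [Nat.one_ne_zero, reduceIte] at hx
    subst hx
    have hl : (Ghat F).plist (.vv ⟨Sum.inr k, ⟨1, by simp only [clen]; omega⟩⟩)
        = [.nc (F.varSnd k), .u ⟨Sum.inr k, ⟨1, by simp only [clen]; omega⟩⟩] := by
      rw [plist_vv_inr_mid k _ (by simp)]
      simp
    refine ⟨⟨?_, ?_⟩, Or.inr (Or.inl ?_)⟩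
    · rw [hl]; simp
    · rw [plist_nc]
      refine List.mem_append_right _ ?_
      rw [ncVV_ge (varSnd_not_lt k), negIdx_varSnd]
      simp
    · exact Inst.prefOver_of_some huv (Inst.pref_head hl (by simp) (by simp))

lemma gm_nd_nu (hM : (Ghat F).Stable M) (k : Fin F.n) (j : ℕ) (hj : j < 2)
    (x : F.Var) (hx : x = if j = 0 then F.varFst k else F.varSnd k)
    (hF : NegFalseH M x) :
    (Ghat F).GMAdj M (.nd x) (nU k (j+1) (by omega)) := by
  unfold nU
  have hpref : (Ghat F).PrefOver M (.nd x) (ndU x) := by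
    refine Inst.prefOver_of_some (msymm hM hF.1) ?_
    refine Inst.pref_of_indexOf (plist_nd x) (by simp) (by simp) ?_
    rw [List.idxOf_cons_ne _ (by simp : HGV.nc' x ≠ ndU x),
        List.idxOf_cons_self,
        List.idxOf_cons_ne _ (by simp : HGV.nc' x ≠ HGV.nc x),
        List.idxOf_cons_ne _ (by simp : ndU x ≠ HGV.nc x),
        List.idxOf_cons_self]
    omega
  rcases (by omega : j = 0 ∨ j = 1) with rfl | rfl
  · simp only [reduceIte] at hx
    subst hx
    have hndu : ndU (F.varFst k) = .u ⟨Sum.inr k, ⟨1, by simp only [clen]; omega⟩⟩ := by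
      rw [ndU_lt (varFst_lt k), negIdx_varFst]
    refine ⟨⟨?_, ?_⟩, Or.inr (Or.inl ?_)⟩
    · rw [plist_nd, ← hndu]; simp
    · rw [plist_u_inr_pos k _ (by simp)]; simp
    · rw [← hndu]; exact hpref
  · simp only [Nat.one_ne_zero, reduceIte] at hx
    subst hx
    have hndu : ndU (F.varSnd k) = .u ⟨Sum.inr k, ⟨2, by simp only [clen]; omega⟩⟩ := by
      rw [ndU_ge (varSnd_not_lt k), negIdx_varSnd]
    refine ⟨⟨?_, ?_⟩, Or.inr (Or.inl ?_)⟩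
    · rw [plist_nd, ← hndu]; simp
    · rw [plist_u_inr_pos k _ (by simp)]; simp
    · rw [← hndu]; exact hpref

lemma gm_nv_t (hM : (Ghat F).Stable M) (k : Fin F.n) :
    (Ghat F).GMAdj M (nV k 2 (by omega)) .t := by
  unfold nV
  refine ⟨⟨?_, ?_⟩, Or.inr (Or.inr (Inst.prefOver_of_none (t_unmatched hM)))⟩
  · rw [plist_vv_inr_last k _ rfl]; simp
  · rw [plist_t]
    exact List.mem_map.2 ⟨Sum.inr k, mem_allC _, rfl⟩

lemma aug_of_negFalse_pair (hM : (Ghat F).Stable M) (k : Fin F.n)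
    (hf : NegFalseH M (F.varFst k)) (hs : NegFalseH M (F.varSnd k)) :
    (Ghat F).HasAugPath M := by
  have hkn := k.isLt
  refine Inst.hasAug_of_chain hM.1 .s .t
    [(nU k 0 (by omega), nV k 0 (by omega)),
     (.nc (F.varFst k), .nd (F.varFst k)),
     (nU k 1 (by omega), nV k 1 (by omega)),
     (.nc (F.varSnd k), .nd (F.varSnd k)),
     (nU k 2 (by omega), nV k 2 (by omega))]
    (by simp) (s_unmatched hM) (t_unmatched hM) ?_ ?_ ?_ ?_ ?_
  · intro q hq
    simp only [List.mem_cons, List.not_mem_nil, or_false] at hq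
    rcases hq with rfl | rfl | rfl | rfl | rfl
    · exact nuv_matched hM k 0 (by omega)
    · exact hf.1
    · exact nuv_matched hM k 1 (by omega)
    · exact hs.1
    · exact nuv_matched hM k 2 (by omega)
  · -- Nodup
    simp only [List.flatMap_cons, List.flatMap_nil, List.cons_append, List.nil_append,
      List.append_nil]
    simp [List.nodup_cons, Formula.varFst, Formula.varSnd, Fin.ext_iff]
    omega
  · -- first edge
    simpa using gm_s_nu hM k
  · -- middle edges
    intro i hi
    have hi' : i < 4 := by simp only [List.length_cons, List.length_nil] at hi; omega
    interval_cases i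
    · simpa using gm_nv_nc hM k 0 (by omega) _ rfl
    · simpa using gm_nd_nu hM k 0 (by omega) _ rfl hf
    · simpa using gm_nv_nc hM k 1 (by omega) _ (by norm_num)
    · simpa using gm_nd_nu hM k 1 (by omega) _ (by norm_num) hs
  · -- last edge
    simpa using gm_nv_t hM k

end PathNeg
section PathPos

variable {F : Formula} {M : HGV F → Option (HGV F)}

/-- `u`-vertex of the positive clause `i`, position `j`. -/
def pU (i : Fin (F.m + F.n)) (j : ℕ) (hj : j ≤ (F.posClause i).length) : HGV F :=
  .u ⟨Sum.inl i, ⟨j, by simp only [clen]; omega⟩⟩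

/-- `v`-vertex of the positive clause `i`, position `j`. -/
def pV (i : Fin (F.m + F.n)) (j : ℕ) (hj : j ≤ (F.posClause i).length) : HGV F :=
  .vv ⟨Sum.inl i, ⟨j, by simp only [clen]; omega⟩⟩

attribute [simp] pU pV

@[simp] lemma mkOcc_fst (i : Fin (F.m + F.n)) (j : ℕ) (h : j < (F.posClause i).length) :
    (mkOcc F i j h).1.1 = i := rfl

@[simp] lemma mkOcc_snd_val (i : Fin (F.m + F.n)) (j : ℕ) (h : j < (F.posClause i).length) :
    ((mkOcc F i j h).1.2).val = j := rfl

@[simp] lemma mkOcc_inj {i : Fin (F.m + F.n)} {j j' : ℕ} {h : j < (F.posClause i).length}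
    {h' : j' < (F.posClause i).length} :
    mkOcc F i j h = mkOcc F i j' h' ↔ j = j' := by
  constructor
  · intro he
    have := congrArg (fun o : F.Occ => (o.1.2).val) he
    simpa using this
  · intro he
    subst he
    rfl

lemma puv_matched (hM : (Ghat F).Stable M) (i : Fin (F.m + F.n)) (j : ℕ)
    (hj : j ≤ (F.posClause i).length) :
    M (pU i j hj) = some (pV i j hj) := uv_matched hM _ _

lemma gm_s_pu (hM : (Ghat F).Stable M) (i : Fin (F.m + F.n)) :
    (Ghat F).GMAdj M .s (pU i 0 (by omega)) := by
  unfold pU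
  refine ⟨⟨?_, ?_⟩, Or.inr (Or.inl (Inst.prefOver_of_none (s_unmatched hM)))⟩
  · rw [plist_s]
    exact List.mem_map.2 ⟨Sum.inl i, mem_allC _, rfl⟩
  · rw [plist_u_inl_zero i _ rfl]; simp

lemma gm_pv_pa (hM : (Ghat F).Stable M) (i : Fin (F.m + F.n)) (j : ℕ)
    (hj : j < (F.posClause i).length) (hPF : PosFalseH M (mkOcc F i j hj)) :
    (Ghat F).GMAdj M (pV i j hj.le) (.pa (mkOcc F i j hj)) := by
  have hl : (Ghat F).plist (pV i j hj.le)
      = [pU i j hj.le, .pa (mkOcc F i j hj)] := by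
    unfold pV pU
    rw [plist_vv_inl_mid i _ (by simp; omega)]
  have hl2 : (Ghat F).plist (.pa (mkOcc F i j hj))
      = [.pb (mkOcc F i j hj), pV i j hj.le, .pb' (mkOcc F i j hj)] := by
    rw [plist_pa]
    rfl
  have e1 : List.idxOf (pV i j hj.le)
      [HGV.pb (mkOcc F i j hj), pV i j hj.le, HGV.pb' (mkOcc F i j hj)] = 1 := by
    rw [List.idxOf_cons_ne _ (show HGV.pb (mkOcc F i j hj) ≠ pV i j hj.le by unfold pV; simp),
      List.idxOf_cons_self]
  have e2 : List.idxOf (HGV.pb' (mkOcc F i j hj))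
      [HGV.pb (mkOcc F i j hj), pV i j hj.le, HGV.pb' (mkOcc F i j hj)] = 2 := by
    rw [List.idxOf_cons_ne _ (by simp),
      List.idxOf_cons_ne _ (show pV i j hj.le ≠ HGV.pb' (mkOcc F i j hj) by unfold pV; simp),
      List.idxOf_cons_self]
  refine ⟨⟨?_, ?_⟩, Or.inr (Or.inr ?_)⟩
  · rw [hl]; simp
  · rw [hl2]; simp
  · refine Inst.prefOver_of_some hPF.1 ?_
    refine Inst.pref_of_indexOf hl2 (by simp) (by simp) ?_
    rw [e1, e2]
    omega

lemma gm_pb'_pa' (hM : (Ghat F).Stable M) (o : F.Occ) (hPF : PosFalseH M o) :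
    (Ghat F).GMAdj M (.pb' o) (.pa' o) := by
  refine ⟨⟨by rw [plist_pb']; simp, by rw [plist_pa']; simp⟩, Or.inr (Or.inr ?_)⟩
  exact Inst.prefOver_of_some hPF.2 (Inst.pref_head (plist_pa' o) (by simp) (by simp))

lemma gm_pb_pu (hM : (Ghat F).Stable M) (i : Fin (F.m + F.n)) (j : ℕ)
    (hj : j < (F.posClause i).length) :
    (Ghat F).GMAdj M (.pb (mkOcc F i j hj)) (pU i (j+1) (by omega)) := by
  have hl : (Ghat F).plist (pU i (j+1) (by omega))
      = [.pb (mkOcc F i j hj), pV i (j+1) (by omega)] := by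
    unfold pU pV
    rw [plist_u_inl_pos i _ (by simp)]
    simp
  refine ⟨⟨?_, ?_⟩, Or.inr (Or.inr ?_)⟩
  · rw [plist_pb]
    have h2 : pbU (mkOcc F i j hj) = pU i (j+1) (by omega) := by simp
    rw [h2]; simp
  · rw [hl]; simp
  · exact Inst.prefOver_of_some (puv_matched hM i (j+1) (by omega))
      (Inst.pref_head hl (by simp) (by unfold pV; simp))

lemma gm_pv_t (hM : (Ghat F).Stable M) (i : Fin (F.m + F.n)) (j : ℕ)
    (hj : j = (F.posClause i).length) :
    (Ghat F).GMAdj M (pV i j hj.le) .t := by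
  subst hj
  unfold pV
  refine ⟨⟨?_, ?_⟩, Or.inr (Or.inr (Inst.prefOver_of_none (t_unmatched hM)))⟩
  · rw [plist_vv_inl_last i _ rfl]; simp
  · rw [plist_t]
    exact List.mem_map.2 ⟨Sum.inl i, mem_allC _, rfl⟩

lemma aug_of_posFalse (hM : (Ghat F).Stable M) (i : Fin (F.m + F.n))
    (hPF : ∀ (j : ℕ) (hj : j < (F.posClause i).length), PosFalseH M (mkOcc F i j hj)) :
    (Ghat F).HasAugPath M := by
  have h1 : 1 ≤ (F.posClause i).length := List.length_pos_iff.2 (F.posClause_ne_nil i)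
  have h3 : (F.posClause i).length ≤ 3 := F.posClause_length_le i
  rcases (by omega : (F.posClause i).length = 1 ∨ (F.posClause i).length = 2 ∨
      (F.posClause i).length = 3) with hr | hr | hr
  · refine Inst.hasAug_of_chain hM.1 .s .t
      [(pU i 0 (by omega), pV i 0 (by omega)),
       (.pa (mkOcc F i 0 (by omega)), .pb' (mkOcc F i 0 (by omega))),
       (.pa' (mkOcc F i 0 (by omega)), .pb (mkOcc F i 0 (by omega))),
       (pU i 1 (by omega), pV i 1 (by omega))]
      (by simp) (s_unmatched hM) (t_unmatched hM) ?_ ?_ ?_ ?_ ?_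
    · intro q hq
      simp only [List.mem_cons, List.not_mem_nil, or_false] at hq
      rcases hq with rfl | rfl | rfl | rfl
      · exact puv_matched hM i 0 (by omega)
      · exact (hPF 0 (by omega)).1
      · exact (hPF 0 (by omega)).2
      · exact puv_matched hM i 1 (by omega)
    · simp only [List.flatMap_cons, List.flatMap_nil, List.cons_append, List.nil_append,
        List.append_nil]
      simp [List.nodup_cons, Fin.ext_iff, Subtype.mk.injEq, Prod.mk.injEq]
    · simpa using gm_s_pu hM i
    · intro ii hii
      have hii' : ii < 3 := by simp only [List.length_cons, List.length_nil] at hii; omega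
      interval_cases ii
      · simpa using gm_pv_pa hM i 0 (by omega) (hPF 0 (by omega))
      · simpa using gm_pb'_pa' hM _ (hPF 0 (by omega))
      · simpa using gm_pb_pu hM i 0 (by omega)
    · simpa using gm_pv_t hM i 1 hr.symm
  · refine Inst.hasAug_of_chain hM.1 .s .t
      [(pU i 0 (by omega), pV i 0 (by omega)),
       (.pa (mkOcc F i 0 (by omega)), .pb' (mkOcc F i 0 (by omega))),
       (.pa' (mkOcc F i 0 (by omega)), .pb (mkOcc F i 0 (by omega))),
       (pU i 1 (by omega), pV i 1 (by omega)),
       (.pa (mkOcc F i 1 (by omega)), .pb' (mkOcc F i 1 (by omega))),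
       (.pa' (mkOcc F i 1 (by omega)), .pb (mkOcc F i 1 (by omega))),
       (pU i 2 (by omega), pV i 2 (by omega))]
      (by simp) (s_unmatched hM) (t_unmatched hM) ?_ ?_ ?_ ?_ ?_
    · intro q hq
      simp only [List.mem_cons, List.not_mem_nil, or_false] at hq
      rcases hq with rfl | rfl | rfl | rfl | rfl | rfl | rfl
      · exact puv_matched hM i 0 (by omega)
      · exact (hPF 0 (by omega)).1
      · exact (hPF 0 (by omega)).2
      · exact puv_matched hM i 1 (by omega)
      · exact (hPF 1 (by omega)).1
      · exact (hPF 1 (by omega)).2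
      · exact puv_matched hM i 2 (by omega)
    · simp only [List.flatMap_cons, List.flatMap_nil, List.cons_append, List.nil_append,
        List.append_nil]
      simp [List.nodup_cons, Fin.ext_iff, Subtype.mk.injEq, Prod.mk.injEq]
    · simpa using gm_s_pu hM i
    · intro ii hii
      have hii' : ii < 6 := by simp only [List.length_cons, List.length_nil] at hii; omega
      interval_cases ii
      · simpa using gm_pv_pa hM i 0 (by omega) (hPF 0 (by omega))
      · simpa using gm_pb'_pa' hM _ (hPF 0 (by omega))
      · simpa using gm_pb_pu hM i 0 (by omega)
      · simpa using gm_pv_pa hM i 1 (by omega) (hPF 1 (by omega))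
      · simpa using gm_pb'_pa' hM _ (hPF 1 (by omega))
      · simpa using gm_pb_pu hM i 1 (by omega)
    · simpa using gm_pv_t hM i 2 hr.symm
  · refine Inst.hasAug_of_chain hM.1 .s .t
      [(pU i 0 (by omega), pV i 0 (by omega)),
       (.pa (mkOcc F i 0 (by omega)), .pb' (mkOcc F i 0 (by omega))),
       (.pa' (mkOcc F i 0 (by omega)), .pb (mkOcc F i 0 (by omega))),
       (pU i 1 (by omega), pV i 1 (by omega)),
       (.pa (mkOcc F i 1 (by omega)), .pb' (mkOcc F i 1 (by omega))),
       (.pa' (mkOcc F i 1 (by omega)), .pb (mkOcc F i 1 (by omega))),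
       (pU i 2 (by omega), pV i 2 (by omega)),
       (.pa (mkOcc F i 2 (by omega)), .pb' (mkOcc F i 2 (by omega))),
       (.pa' (mkOcc F i 2 (by omega)), .pb (mkOcc F i 2 (by omega))),
       (pU i 3 (by omega), pV i 3 (by omega))]
      (by simp) (s_unmatched hM) (t_unmatched hM) ?_ ?_ ?_ ?_ ?_
    · intro q hq
      simp only [List.mem_cons, List.not_mem_nil, or_false] at hq
      rcases hq with rfl | rfl | rfl | rfl | rfl | rfl | rfl | rfl | rfl | rfl
      · exact puv_matched hM i 0 (by omega)
      · exact (hPF 0 (by omega)).1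
      · exact (hPF 0 (by omega)).2
      · exact puv_matched hM i 1 (by omega)
      · exact (hPF 1 (by omega)).1
      · exact (hPF 1 (by omega)).2
      · exact puv_matched hM i 2 (by omega)
      · exact (hPF 2 (by omega)).1
      · exact (hPF 2 (by omega)).2
      · exact puv_matched hM i 3 (by omega)
    · simp only [List.flatMap_cons, List.flatMap_nil, List.cons_append, List.nil_append,
        List.append_nil]
      simp [List.nodup_cons, Fin.ext_iff, Subtype.mk.injEq, Prod.mk.injEq]
    · simpa using gm_s_pu hM i
    · intro ii hii
      have hii' : ii < 9 := by simp only [List.length_cons, List.length_nil] at hii; omega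
      interval_cases ii
      · simpa using gm_pv_pa hM i 0 (by omega) (hPF 0 (by omega))
      · simpa using gm_pb'_pa' hM _ (hPF 0 (by omega))
      · simpa using gm_pb_pu hM i 0 (by omega)
      · simpa using gm_pv_pa hM i 1 (by omega) (hPF 1 (by omega))
      · simpa using gm_pb'_pa' hM _ (hPF 1 (by omega))
      · simpa using gm_pb_pu hM i 1 (by omega)
      · simpa using gm_pv_pa hM i 2 (by omega) (hPF 2 (by omega))
      · simpa using gm_pb'_pa' hM _ (hPF 2 (by omega))
      · simpa using gm_pb_pu hM i 2 (by omega)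
    · simpa using gm_pv_t hM i 3 hr.symm

end PathPos
section Dir1

variable {F : Formula}

lemma direction1 (M : HGV F → Option (HGV F)) (hM : (Ghat F).Stable M)
    (hpath : ¬ (Ghat F).HasAugPath M) : F.Sat (asgnOfH M) := by
  constructor
  · intro i
    by_contra hcon
    push_neg at hcon
    refine hpath (aug_of_posFalse hM i ?_)
    intro j hj
    have hx : F.litOf (mkOcc F i j hj) ∈ F.posClause i := by
      unfold Formula.litOf
      exact List.get_mem _ _
    have h1 := hcon _ hx
    have hNF : ¬ NegFalseH M (F.litOf (mkOcc F i j hj)) := by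
      intro hN
      exact h1 (by simp [asgnOfH, hN])
    have hNT : NegTrueH M (F.litOf (mkOcc F i j hj)) :=
      (neg_state hM _).resolve_right hNF
    exact posFalse_of_negTrue hM _ hNT
  · intro k
    by_contra hcon
    push_neg at hcon
    refine hpath (aug_of_negFalse_pair hM k ?_ ?_)
    · by_cases h : NegFalseH M (F.varFst k)
      · exact h
      · exact absurd (by simp [asgnOfH, h] : asgnOfH M (F.varFst k) = false) hcon.1
    · by_cases h : NegFalseH M (F.varSnd k)
      · exact h
      · exact absurd (by simp [asgnOfH, h] : asgnOfH M (F.varSnd k) = false) hcon.2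

end Dir1
namespace Inst

variable {V : Type*} [DecidableEq V] [Fintype V] {I : Inst V} {p : V → Option V}

lemma prefOver_elim {u v w : V} (hm : p u = some w) (h : I.PrefOver p u v) :
    I.pref u v w := by
  unfold PrefOver at h
  rw [hm] at h
  exact h

end Inst

section D2A

variable {F : Formula}

lemma litOf_of_mem_occsOfVar {o : F.Occ} {x : F.Var} (h : o ∈ F.occsOfVar x) :
    F.litOf o = x := by
  unfold Formula.occsOfVar at h
  rw [List.mem_filter] at h
  simpa using h.2

lemma adj_uv (q : UVIdx F) : (Ghat F).adj (.u q) (.vv q) := by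
  rcases q with ⟨ℓ, j⟩
  constructor
  · rcases ℓ with i | k
    · by_cases h0 : j.val = 0
      · rw [plist_u_inl_zero i j h0]; simp
      · rw [plist_u_inl_pos i j h0]; simp
    · by_cases h0 : j.val = 0
      · rw [plist_u_inr_zero k j h0]; simp
      · rw [plist_u_inr_pos k j h0]; simp
  · rcases ℓ with i | k
    · by_cases h0 : j.val = (F.posClause i).length
      · rw [plist_vv_inl_last i j h0]; simp
      · rw [plist_vv_inl_mid i j h0]; simp
    · by_cases h0 : j.val = 2
      · rw [plist_vv_inr_last k j h0]; simp
      · rw [plist_vv_inr_mid k j h0]; simp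

lemma adj_pa_pb (o : F.Occ) : (Ghat F).adj (.pa o) (.pb o) :=
  ⟨by rw [plist_pa]; simp, by rw [plist_pb]; simp⟩

lemma adj_pa_pb' (o : F.Occ) : (Ghat F).adj (.pa o) (.pb' o) :=
  ⟨by rw [plist_pa]; simp, by rw [plist_pb']; simp⟩

lemma adj_pa'_pb (o : F.Occ) : (Ghat F).adj (.pa' o) (.pb o) :=
  ⟨by rw [plist_pa']; simp, by rw [plist_pb]; simp⟩

lemma adj_pa'_pb' (o : F.Occ) : (Ghat F).adj (.pa' o) (.pb' o) :=
  ⟨by rw [plist_pa']; simp, by rw [plist_pb']; simp⟩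

lemma adj_nc_nd (x : F.Var) : (Ghat F).adj (.nc x) (.nd x) :=
  ⟨by rw [plist_nc]; simp, by rw [plist_nd]; simp⟩

lemma adj_nc_nd' (x : F.Var) : (Ghat F).adj (.nc x) (.nd' x) :=
  ⟨by rw [plist_nc]; simp, by rw [plist_nd']; simp⟩

lemma adj_nc'_nd (x : F.Var) : (Ghat F).adj (.nc' x) (.nd x) :=
  ⟨by rw [plist_nc']; simp, by rw [plist_nd]; simp⟩

lemma adj_nc'_nd' (x : F.Var) : (Ghat F).adj (.nc' x) (.nd' x) :=
  ⟨by rw [plist_nc']; simp, by rw [plist_nd']; simp⟩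

lemma adj_symm {u v : HGV F} (h : (Ghat F).adj u v) : (Ghat F).adj v u := ⟨h.2, h.1⟩

lemma MAH_matching (A : F.Var → Bool) : (Ghat F).IsMatching (MAH F A) := by
  constructor
  · intro u v h
    cases u <;> simp only [MAH] at h ⊢
    · exact nomatch h
    · exact nomatch h
    all_goals (
      first
      | (injection h with h; subst h; simp [MAH])
      | (rcases hA : A _ with _ | _ <;>
          rw [hA] at h <;> simp only [if_true, if_false, Bool.false_eq_true, reduceIte] at h <;>
          injection h with h <;> subst h <;> simp [MAH, hA]))
  · intro u v h
    cases u <;> simp only [MAH] at h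
    · exact nomatch h
    · exact nomatch h
    · injection h with h; subst h; exact adj_uv _
    · injection h with h; subst h; exact adj_symm (adj_uv _)
    · split at h <;> (injection h with h; subst h)
      · exact adj_pa_pb _
      · exact adj_pa_pb' _
    · split at h <;> (injection h with h; subst h)
      · exact adj_symm (adj_pa_pb _)
      · exact adj_symm (adj_pa'_pb _)
    · split at h <;> (injection h with h; subst h)
      · exact adj_pa'_pb' _
      · exact adj_pa'_pb _
    · split at h <;> (injection h with h; subst h)
      · exact adj_symm (adj_pa'_pb' _)
      · exact adj_symm (adj_pa_pb' _)
    · split at h <;> (injection h with h; subst h)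
      · exact adj_nc_nd _
      · exact adj_nc_nd' _
    · split at h <;> (injection h with h; subst h)
      · exact adj_symm (adj_nc_nd _)
      · exact adj_symm (adj_nc'_nd _)
    · split at h <;> (injection h with h; subst h)
      · exact adj_nc'_nd' _
      · exact adj_nc'_nd _
    · split at h <;> (injection h with h; subst h)
      · exact adj_symm (adj_nc'_nd' _)
      · exact adj_symm (adj_nc_nd' _)

/-- There is a true literal at position `≥ j` of the positive clause `i`. -/
def Ptr (A : F.Var → Bool) (i : Fin (F.m + F.n)) (j : ℕ) : Prop :=
  ∃ (j' : ℕ) (hj' : j' < (F.posClause i).length),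
    j ≤ j' ∧ A (F.litOf (mkOcc F i j' hj')) = true

lemma Ptr_zero {A : F.Var → Bool} (hA : F.Sat A) (i : Fin (F.m + F.n)) : Ptr A i 0 := by
  obtain ⟨x, hx, hxt⟩ := hA.1 i
  obtain ⟨⟨j', hj'⟩, rfl⟩ := List.mem_iff_get.1 hx
  exact ⟨j', hj', Nat.zero_le _, hxt⟩

lemma Ptr_last {A : F.Var → Bool} {i : Fin (F.m + F.n)} {j : ℕ}
    (hj : (F.posClause i).length ≤ j) : ¬ Ptr A i j := by
  rintro ⟨j', hj', hle, _⟩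
  omega

lemma Ptr_succ_iff {A : F.Var → Bool} {i : Fin (F.m + F.n)} {j : ℕ}
    (hj : j < (F.posClause i).length) :
    Ptr A i j ↔ (A (F.litOf (mkOcc F i j hj)) = true ∨ Ptr A i (j + 1)) := by
  constructor
  · rintro ⟨j', hj', hle, ht⟩
    rcases Nat.eq_or_lt_of_le hle with rfl | hlt
    · exact Or.inl ht
    · exact Or.inr ⟨j', hj', hlt, ht⟩
  · rintro (ht | ⟨j', hj', hle, ht⟩)
    · exact ⟨j, hj, le_refl _, ht⟩
    · exact ⟨j', hj', by omega, ht⟩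

/-- The cover certificate for `M_A`. -/
def inC (A : F.Var → Bool) : HGV F → Prop
  | .s => False
  | .t => False
  | .u ⟨Sum.inl i, j⟩ => Ptr A i j.val
  | .vv ⟨Sum.inl i, j⟩ => ¬ Ptr A i j.val
  | .u ⟨Sum.inr k, j⟩ => j.val = 0 ∨ (j.val = 1 ∧ A (F.varSnd k) = false)
  | .vv ⟨Sum.inr k, j⟩ => j.val = 2 ∨ (j.val = 1 ∧ A (F.varSnd k) = true)
  | .pa o => A (F.litOf o) = false ∧ Ptr A o.1.1 (o.1.2.val + 1)
  | .pa' o => A (F.litOf o) = false ∧ Ptr A o.1.1 (o.1.2.val + 1)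
  | .pb o => A (F.litOf o) = true ∨ ¬ Ptr A o.1.1 (o.1.2.val + 1)
  | .pb' o => A (F.litOf o) = true ∨ ¬ Ptr A o.1.1 (o.1.2.val + 1)
  | .nc x => x.val < F.n ∨ A x = false
  | .nc' x => x.val < F.n ∨ A x = false
  | .nd x => ¬ x.val < F.n ∧ A x = true
  | .nd' x => ¬ x.val < F.n ∧ A x = true

end D2A
section D2B

variable {F : Formula} {A : F.Var → Bool}

lemma not_pref_top {u v w : HGV F} {l : List (HGV F)}
    (hl : (Ghat F).plist u = w :: l) (hp : (Ghat F).pref u v w) : False := by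
  rcases hp with ⟨_, _, hlt⟩
  rw [hl, List.idxOf_cons_self] at hlt
  omega

lemma no_pref_vv_inl (i : Fin (F.m + F.n)) (j : Fin (clen F (Sum.inl i) + 1)) (v : HGV F)
    (h : (Ghat F).PrefOver (MAH F A) (.vv ⟨Sum.inl i, j⟩) v) : False := by
  have hm : MAH F A (.vv ⟨Sum.inl i, j⟩) = some (.u ⟨Sum.inl i, j⟩) := rfl
  by_cases h0 : j.val = (F.posClause i).length
  · exact not_pref_top (plist_vv_inl_last i j h0) (Inst.prefOver_elim hm h)
  · exact not_pref_top (plist_vv_inl_mid i j h0) (Inst.prefOver_elim hm h)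

lemma no_pref_u_inr (k : Fin F.n) (j : Fin (clen F (Sum.inr k) + 1)) (v : HGV F)
    (h : (Ghat F).PrefOver (MAH F A) (.u ⟨Sum.inr k, j⟩) v) : False := by
  have hm : MAH F A (.u ⟨Sum.inr k, j⟩) = some (.vv ⟨Sum.inr k, j⟩) := rfl
  by_cases h0 : j.val = 0
  · exact not_pref_top (plist_u_inr_zero k j h0) (Inst.prefOver_elim hm h)
  · exact not_pref_top (plist_u_inr_pos k j h0) (Inst.prefOver_elim hm h)

lemma no_pref_nd (x : F.Var) (hAf : A x = false) (v : HGV F)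
    (h : (Ghat F).PrefOver (MAH F A) (.nd x) v) : False := by
  have hm : MAH F A (.nd x) = some (.nc' x) := by simp [MAH, hAf]
  exact not_pref_top (plist_nd x) (Inst.prefOver_elim hm h)

lemma no_pref_pa (o : F.Occ) (hAt : A (F.litOf o) = true) (v : HGV F)
    (h : (Ghat F).PrefOver (MAH F A) (.pa o) v) : False := by
  have hm : MAH F A (.pa o) = some (.pb o) := by simp [MAH, hAt]
  exact not_pref_top (plist_pa o) (Inst.prefOver_elim hm h)

lemma inC_matched (v : HGV F) (hv : inC A v) : MAH F A v ≠ none := by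
  cases v
  case s => exact hv.elim
  case t => exact hv.elim
  all_goals (simp only [MAH]; try split) <;> simp

lemma inC_one_per_edge (u v : HGV F) (h : MAH F A u = some v) (hu : inC A u)
    (hv : inC A v) : False := by
  cases u
  case s => exact nomatch h
  case t => exact nomatch h
  case u q =>
    injection h with h
    subst h
    rcases q with ⟨ℓ, j⟩
    rcases ℓ with i | k
    · simp only [inC] at hu hv
      exact hv hu
    · simp only [inC] at hu hv
      rcases hu with h0 | ⟨h1, hf⟩ <;> rcases hv with h2 | ⟨h1', ht⟩
      · omega
      · omega
      · omega
      · rw [hf] at ht; exact Bool.noConfusion ht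
  case vv q =>
    injection h with h
    subst h
    rcases q with ⟨ℓ, j⟩
    rcases ℓ with i | k
    · simp only [inC] at hu hv
      exact hu hv
    · simp only [inC] at hu hv
      rcases hv with h0 | ⟨h1, hf⟩ <;> rcases hu with h2 | ⟨h1', ht⟩
      · omega
      · omega
      · omega
      · rw [hf] at ht; exact Bool.noConfusion ht
  case pa o =>
    simp only [MAH] at h
    split at h <;> (injection h with h; subst h) <;> simp only [inC] at hu hv
    · rw [hu.1] at *; simp_all
    · rcases hv with hv | hv
      · rw [hu.1] at hv; exact Bool.noConfusion hv
      · exact hv hu.2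
  case pa' o =>
    simp only [MAH] at h
    split at h <;> (injection h with h; subst h) <;> simp only [inC] at hu hv
    · rcases hv with hv | hv
      · rw [hu.1] at hv; exact Bool.noConfusion hv
      · exact hv hu.2
    · rcases hv with hv | hv
      · rw [hu.1] at hv; exact Bool.noConfusion hv
      · exact hv hu.2
  case pb o =>
    simp only [MAH] at h
    split at h <;> (injection h with h; subst h) <;> simp only [inC] at hu hv <;>
      rename_i hA'
    · rw [hA'] at hv; simp at hv
    · simp only [Bool.not_eq_true] at hA'
      rcases hu with hu | hu
      · rw [hA'] at hu; exact Bool.noConfusion hu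
      · exact hu hv.2
  case pb' o =>
    simp only [MAH] at h
    split at h <;> (injection h with h; subst h) <;> simp only [inC] at hu hv <;>
      rename_i hA'
    · rw [hA'] at hv; simp at hv
    · simp only [Bool.not_eq_true] at hA'
      rcases hu with hu | hu
      · rw [hA'] at hu; exact Bool.noConfusion hu
      · exact hu hv.2
  case nc x =>
    simp only [MAH] at h
    split at h <;> (injection h with h; subst h) <;> simp only [inC] at hu hv <;>
      rename_i hA'
    · rcases hu with hu | hu
      · exact hv.1 hu
      · rw [hA'] at hu; exact Bool.noConfusion hu
    · simp only [Bool.not_eq_true] at hA'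
      rw [hA'] at hv
      exact Bool.noConfusion hv.2
  case nc' x =>
    simp only [MAH] at h
    split at h <;> (injection h with h; subst h) <;> simp only [inC] at hu hv <;>
      rename_i hA'
    · rcases hu with hu | hu
      · exact hv.1 hu
      · rw [hA'] at hu; exact Bool.noConfusion hu
    · simp only [Bool.not_eq_true] at hA'
      rw [hA'] at hv
      exact Bool.noConfusion hv.2
  case nd x =>
    simp only [MAH] at h
    split at h <;> (injection h with h; subst h) <;> simp only [inC] at hu hv <;>
      rename_i hA'
    · rcases hv with hv | hv
      · exact hu.1 hv
      · rw [hA'] at hv; exact Bool.noConfusion hv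
    · simp only [Bool.not_eq_true] at hA'
      rw [hA'] at hu
      exact Bool.noConfusion hu.2
  case nd' x =>
    simp only [MAH] at h
    split at h <;> (injection h with h; subst h) <;> simp only [inC] at hu hv <;>
      rename_i hA'
    · rcases hv with hv | hv
      · exact hu.1 hv
      · rw [hA'] at hv; exact Bool.noConfusion hv
    · simp only [Bool.not_eq_true] at hA'
      rw [hA'] at hu
      exact Bool.noConfusion hu.2

end D2B
section D2C

variable {F : Formula} {A : F.Var → Bool}

lemma cover_edge (hA : F.Sat A) (u v : HGV F)
    (hgm : (Ghat F).GMAdj (MAH F A) u v) (hne : MAH F A u ≠ some v) :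
    inC A u ∨ inC A v := by
  obtain ⟨⟨hvm, hum⟩, hvote⟩ := hgm
  clear hum
  cases u
  case s =>
    rw [plist_s] at hvm
    rcases List.mem_map.1 hvm with ⟨ℓ, _, rfl⟩
    right
    rcases ℓ with i | k
    · simp only [inC]
      exact Ptr_zero hA i
    · simp only [inC]
      left; trivial
  case t =>
    rw [plist_t] at hvm
    rcases List.mem_map.1 hvm with ⟨ℓ, _, rfl⟩
    right
    rcases ℓ with i | k
    · simp only [inC]
      exact Ptr_last (by simp [clen])
    · simp only [inC]
      left; trivial
  case u q =>
    rcases q with ⟨ℓ, j⟩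
    rcases ℓ with i | k
    · by_cases h0 : j.val = 0
      · rw [plist_u_inl_zero i j h0] at hvm
        simp only [List.mem_cons, List.not_mem_nil, or_false] at hvm
        rcases hvm with rfl | rfl
        · exact absurd rfl hne
        · left
          simp only [inC, h0]
          exact Ptr_zero hA i
      · rw [plist_u_inl_pos i j h0] at hvm
        simp only [List.mem_cons, List.not_mem_nil, or_false] at hvm
        rcases hvm with rfl | rfl
        · simp only [inC, mkOcc_fst, mkOcc_snd_val]
          rw [show j.val - 1 + 1 = j.val from by omega]
          by_cases hP : Ptr A i j.val
          · exact Or.inl hP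
          · exact Or.inr (Or.inr hP)
        · exact absurd rfl hne
    · by_cases h0 : j.val = 0
      · rw [plist_u_inr_zero k j h0] at hvm
        simp only [List.mem_cons, List.not_mem_nil, or_false] at hvm
        rcases hvm with rfl | rfl
        · exact absurd rfl hne
        · left
          simp only [inC]
          exact Or.inl h0
      · rw [plist_u_inr_pos k j h0] at hvm
        simp only [List.mem_cons, List.not_mem_nil, or_false] at hvm
        rcases hvm with rfl | rfl
        · exact absurd rfl hne
        · -- v = nd (if j = 1 then fst else snd)
          have hj2 : j.val = 1 ∨ j.val = 2 := by
            have := j.isLt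
            simp only [clen] at this
            omega
          by_cases hj1 : j.val = 1
          · simp only [hj1, if_pos rfl]
            cases hAy : A (F.varFst k)
            · -- dead edge
              exfalso
              rcases hvote with h | h | h
              · simp [MAH] at h
              · exact no_pref_u_inr k j _ h
              · simp only [hj1, if_pos rfl] at h
                exact no_pref_nd _ hAy _ h
            · -- A fst = true → A snd = false → u ∈ C
              left
              simp only [inC]
              right
              refine ⟨hj1, ?_⟩
              rcases hA.2 k with hf | hs
              · rw [hAy] at hf; exact Bool.noConfusion hf
              · exact hs
          · have hj2' : j.val = 2 := by omega
            simp only [hj1, if_false]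
            cases hAy : A (F.varSnd k)
            · exfalso
              rcases hvote with h | h | h
              · simp [MAH] at h
              · exact no_pref_u_inr k j _ h
              · simp only [hj1, if_false] at h
                exact no_pref_nd _ hAy _ h
            · right
              simp only [inC]
              exact ⟨varSnd_not_lt k, hAy⟩
  case vv q =>
    rcases q with ⟨ℓ, j⟩
    rcases ℓ with i | k
    · by_cases h0 : j.val = (F.posClause i).length
      · rw [plist_vv_inl_last i j h0] at hvm
        simp only [List.mem_cons, List.not_mem_nil, or_false] at hvm
        rcases hvm with rfl | rfl
        · exact absurd rfl hne
        · left
          simp only [inC, h0]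
          exact Ptr_last (le_refl _)
      · rw [plist_vv_inl_mid i j h0] at hvm
        simp only [List.mem_cons, List.not_mem_nil, or_false] at hvm
        rcases hvm with rfl | rfl
        · exact absurd rfl hne
        · -- v = pa (mkOcc i j)
          have hj : j.val < (F.posClause i).length := by
            have := j.isLt
            simp only [clen] at this
            omega
          cases hAy : A (F.litOf (mkOcc F i j.val hj))
          · -- A false : cover
            by_cases hP : Ptr A i (j.val + 1)
            · right
              simp only [inC, mkOcc_fst, mkOcc_snd_val]
              exact ⟨hAy, hP⟩
            · left
              simp only [inC]
              rw [Ptr_succ_iff hj]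
              push_neg
              exact ⟨by simp [hAy], hP⟩
          · -- dead edge
            exfalso
            rcases hvote with h | h | h
            · simp [MAH] at h
            · exact no_pref_vv_inl i j _ h
            · exact no_pref_pa _ hAy _ h
    · by_cases h0 : j.val = 2
      · rw [plist_vv_inr_last k j h0] at hvm
        simp only [List.mem_cons, List.not_mem_nil, or_false] at hvm
        rcases hvm with rfl | rfl
        · left
          simp only [inC]
          exact Or.inl h0
        · left
          simp only [inC]
          exact Or.inl h0
      · rw [plist_vv_inr_mid k j h0] at hvm
        simp only [List.mem_cons, List.not_mem_nil, or_false] at hvm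
        rcases hvm with rfl | rfl
        · by_cases hj0 : j.val = 0
          · right
            simp only [hj0, if_pos rfl, inC]
            exact Or.inl (varFst_lt k)
          · have hj1 : j.val = 1 := by
              have := j.isLt
              simp only [clen] at this
              omega
            simp only [hj0, if_false]
            cases hAy : A (F.varSnd k)
            · right
              simp only [inC]
              exact Or.inr hAy
            · left
              simp only [inC]
              exact Or.inr ⟨hj1, hAy⟩
        · exact absurd rfl hne
  case pa o =>
    rw [plist_pa] at hvm
    simp only [List.mem_cons, List.not_mem_nil, or_false] at hvm
    rcases hvm with rfl | rfl | rfl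
    · -- v = pb o
      cases hAy : A (F.litOf o)
      · by_cases hP : Ptr A o.1.1 (o.1.2.val + 1)
        · left; simp only [inC]; exact ⟨hAy, hP⟩
        · right; simp only [inC]; exact Or.inr hP
      · exact absurd (by simp [MAH, hAy]) hne
    · -- v = paVV o
      cases hAy : A (F.litOf o)
      · by_cases hP : Ptr A o.1.1 (o.1.2.val + 1)
        · left; simp only [inC]; exact ⟨hAy, hP⟩
        · right
          have ho : paVV o = .vv ⟨Sum.inl o.1.1,
              ⟨o.1.2.val, by have := o.2; simp only [clen]; omega⟩⟩ := rfl
          rw [ho]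
          simp only [inC]
          rw [Ptr_succ_iff (by exact o.2)]
          push_neg
          refine ⟨?_, hP⟩
          have : mkOcc F o.1.1 o.1.2.val o.2 = o := rfl
          rw [this, hAy]
          simp
      · exfalso
        rcases hvote with h | h | h
        · simp [MAH, hAy] at h
        · exact no_pref_pa _ hAy _ h
        · exact no_pref_vv_inl o.1.1 _ _ h
    · -- v = pb' o
      cases hAy : A (F.litOf o)
      · exact absurd (by simp [MAH, hAy]) hne
      · right; simp only [inC]; exact Or.inl hAy
  case pa' o =>
    rw [plist_pa'] at hvm
    simp only [List.mem_cons, List.not_mem_nil, or_false] at hvm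
    rcases hvm with rfl | rfl
    · cases hAy : A (F.litOf o)
      · by_cases hP : Ptr A o.1.1 (o.1.2.val + 1)
        · left; simp only [inC]; exact ⟨hAy, hP⟩
        · right; simp only [inC]; exact Or.inr hP
      · exact absurd (by simp [MAH, hAy]) hne
    · cases hAy : A (F.litOf o)
      · exact absurd (by simp [MAH, hAy]) hne
      · right; simp only [inC]; exact Or.inl hAy
  case pb o =>
    rw [plist_pb] at hvm
    simp only [List.mem_cons, List.not_mem_nil, or_false] at hvm
    rcases hvm with rfl | rfl | rfl | rfl
    · cases hAy : A (F.litOf o)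
      · exact absurd (by simp [MAH, hAy]) hne
      · left; simp only [inC]; exact Or.inl hAy
    · cases hAy : A (F.litOf o)
      · right; simp only [inC]; exact Or.inr hAy
      · left; simp only [inC]; exact Or.inl hAy
    · cases hAy : A (F.litOf o)
      · by_cases hP : Ptr A o.1.1 (o.1.2.val + 1)
        · right; simp only [inC]; exact ⟨hAy, hP⟩
        · left; simp only [inC]; exact Or.inr hP
      · exact absurd (by simp [MAH, hAy]) hne
    · -- v = pbU o
      by_cases hP : Ptr A o.1.1 (o.1.2.val + 1)
      · right
        have ho : pbU o = .u ⟨Sum.inl o.1.1,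
            ⟨o.1.2.val + 1, by have := o.2; simp only [clen]; omega⟩⟩ := rfl
        rw [ho]
        simp only [inC]
        exact hP
      · left; simp only [inC]; exact Or.inr hP
  case pb' o =>
    rw [plist_pb'] at hvm
    simp only [List.mem_cons, List.not_mem_nil, or_false] at hvm
    rcases hvm with rfl | rfl
    · cases hAy : A (F.litOf o)
      · exact absurd (by simp [MAH, hAy]) hne
      · left; simp only [inC]; exact Or.inl hAy
    · cases hAy : A (F.litOf o)
      · by_cases hP : Ptr A o.1.1 (o.1.2.val + 1)
        · right; simp only [inC]; exact ⟨hAy, hP⟩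
        · left; simp only [inC]; exact Or.inr hP
      · exact absurd (by simp [MAH, hAy]) hne
  case nc x =>
    rw [plist_nc] at hvm
    simp only [List.cons_append, List.mem_cons, List.mem_append, List.mem_map,
      List.not_mem_nil, or_false] at hvm
    rcases hvm with rfl | ⟨o, ho, rfl⟩ | rfl | rfl
    · cases hAy : A x
      · left; simp only [inC]; exact Or.inr hAy
      · exact absurd (by simp [MAH, hAy]) hne
    · have hlit := litOf_of_mem_occsOfVar ho
      cases hAy : A x
      · left; simp only [inC]; exact Or.inr hAy
      · right; simp only [inC]
        exact Or.inl (by rw [hlit, hAy])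
    · cases hAy : A x
      · exact absurd (by simp [MAH, hAy]) hne
      · by_cases hx : x.val < F.n
        · left; simp only [inC]; exact Or.inl hx
        · right; simp only [inC]; exact ⟨hx, hAy⟩
    · -- v = ncVV x
      by_cases hx : x.val < F.n
      · left; simp only [inC]; exact Or.inl hx
      · cases hAy : A x
        · left; simp only [inC]; exact Or.inr hAy
        · right
          rw [ncVV_ge hx]
          simp only [inC]
          exact Or.inr ⟨by trivial, by rw [varSnd_negIdx hx, hAy]⟩
  case nc' x =>
    rw [plist_nc'] at hvm
    simp only [List.mem_cons, List.not_mem_nil, or_false] at hvm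
    rcases hvm with rfl | rfl
    · cases hAy : A x
      · left; simp only [inC]; exact Or.inr hAy
      · exact absurd (by simp [MAH, hAy]) hne
    · cases hAy : A x
      · exact absurd (by simp [MAH, hAy]) hne
      · by_cases hx : x.val < F.n
        · left; simp only [inC]; exact Or.inl hx
        · right; simp only [inC]; exact ⟨hx, hAy⟩
  case nd x =>
    rw [plist_nd] at hvm
    simp only [List.mem_cons, List.not_mem_nil, or_false] at hvm
    rcases hvm with rfl | rfl | rfl
    · cases hAy : A x
      · exact absurd (by simp [MAH, hAy]) hne
      · by_cases hx : x.val < F.n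
        · right; simp only [inC]; exact Or.inl hx
        · left; simp only [inC]; exact ⟨hx, hAy⟩
    · -- v = ndU x
      cases hAy : A x
      · -- dead edge
        exfalso
        rcases hvote with h | h | h
        · simp [MAH, hAy] at h
        · exact no_pref_nd _ hAy _ h
        · by_cases hx : x.val < F.n
          · rw [ndU_lt hx] at h
            exact no_pref_u_inr _ _ _ h
          · rw [ndU_ge hx] at h
            exact no_pref_u_inr _ _ _ h
      · by_cases hx : x.val < F.n
        · right
          rw [ndU_lt hx]
          simp only [inC]
          right
          refine ⟨by trivial, ?_⟩
          rcases hA.2 (F.negIdx x) with hf | hs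
          · rw [varFst_negIdx hx, hAy] at hf
            exact Bool.noConfusion hf
          · exact hs
        · left; simp only [inC]; exact ⟨hx, hAy⟩
    · cases hAy : A x
      · right; simp only [inC]; exact Or.inr hAy
      · exact absurd (by simp [MAH, hAy]) hne
  case nd' x =>
    rw [plist_nd'] at hvm
    simp only [List.mem_cons, List.not_mem_nil, or_false] at hvm
    rcases hvm with rfl | rfl
    · cases hAy : A x
      · exact absurd (by simp [MAH, hAy]) hne
      · by_cases hx : x.val < F.n
        · right; simp only [inC]; exact Or.inl hx
        · left; simp only [inC]; exact ⟨hx, hAy⟩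
    · cases hAy : A x
      · right; simp only [inC]; exact Or.inr hAy
      · exact absurd (by simp [MAH, hAy]) hne

end D2C
section Final

variable {F : Formula}

lemma direction2 (A : F.Var → Bool) (hA : F.Sat A) :
    ¬ (Ghat F).HasAugPath (MAH F A) := by
  refine Inst.no_aug_of_cover (MAH_matching A)
    (Finset.univ.filter (fun v => inC A v)) ?_ ?_ ?_
  · intro v hv
    rw [Finset.mem_filter] at hv
    exact inC_matched v hv.2
  · intro u v h hu hv
    rw [Finset.mem_filter] at hu hv
    exact inC_one_per_edge u v h hu.2 hv.2
  · intro u v hgm hne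
    rcases cover_edge hA u v hgm hne with h | h
    · exact Or.inl (Finset.mem_filter.2 ⟨Finset.mem_univ _, h⟩)
    · exact Or.inr (Finset.mem_filter.2 ⟨Finset.mem_univ _, h⟩)

end Final

/-- If `M` is a stable matching of `Ĝ_φ` and `G_M` contains
no `M`-augmenting path, then the associated assignment `A_M` satisfies `φ`.
Conversely, if `A` is a satisfying assignment of `φ`, then `G_{M_A}` contains
no `M_A`-augmenting path. -/
theorem Ghat_no_augpath_iff_satisfying (F : Formula) :
    (∀ p : HGV F → Option (HGV F), (Ghat F).Stable p →
      ¬ (Ghat F).HasAugPath p → F.Sat (asgnOfH p)) ∧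
    (∀ A : F.Var → Bool, F.Sat A → ¬ (Ghat F).HasAugPath (MAH F A)) := by
  exact ⟨fun p hp hpath => direction1 p hp hpath, fun A hA => direction2 A hA⟩

end PopMatch
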